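/- arXiv:2211.12246 — 5 statements merged into one kernel-verified Lean document; each statement's English description precedes it below -/
import Mathlib

section
/- For every Lebesgue measurable set A ⊆ Ω there exists a uniquely determined minimizer u_A ∈ L²(Ω) of the functional u ↦ J(u,A), and this minimizer satisfies χ_A·u_A = u_A almost everywhere. -/
open MeasureTheory ENNReal Set Filter Metric Topology
open scoped Classical symmDiff NNReal

noncomputable section

namespace L0Control

variable {α : Type*} [MeasurableSpace α]

/-- The characteristic function `χ_A` of a set `A`, as a real-valued function. -/
def chi (A : Set α) (x : α) : ℝ := A.indicator (fun _ => (1 : ℝ)) x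

/-- Pointwise multiplication of `u ∈ L²(μ)` by the characteristic function of `A`,
as an element of `L²(μ)` (junk value `0` if `A` is not measurable). -/
def chiMul {μ : Measure α} (A : Set α) (u : Lp ℝ 2 μ) : Lp ℝ 2 μ :=
  if hA : MeasurableSet A then
    MemLp.toLp (A.indicator (u : α → ℝ)) ((Lp.memLp u).indicator hA)
  else 0

variable {Y : Type*} [NormedAddCommGroup Y] [InnerProductSpace ℝ Y]

/-- The objective functional
`J(u, A) = ½‖S(χ_A u) − y_d‖² + ∫_Ω (g(u(x)) + χ_A(x) β(x)) dx`,
with values in `EReal` (the `g`-part may be `+∞`). -/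
def Jfun {μ : Measure α} (S : Lp ℝ 2 μ →L[ℝ] Y) (yd : Y) (g : ℝ → ℝ≥0∞) (β : α → ℝ)
    (u : Lp ℝ 2 μ) (A : Set α) : EReal :=
  ((2⁻¹ * ‖S (chiMul A u) - yd‖ ^ 2 + ∫ x in A, β x ∂μ : ℝ) : EReal)
    + ((∫⁻ x, g (u x) ∂μ : ℝ≥0∞) : EReal)

/-- `u` minimizes `J(·, A)` over `L²(μ)`. -/
def IsMinimizer {μ : Measure α} (S : Lp ℝ 2 μ →L[ℝ] Y) (yd : Y) (g : ℝ → ℝ≥0∞) (β : α → ℝ)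
    (A : Set α) (u : Lp ℝ 2 μ) : Prop :=
  ∀ v : Lp ℝ 2 μ, Jfun S yd g β u A ≤ Jfun S yd g β v A

/-- `(u, y, p)` is a solution triple of the problem `(P_A)`:
`u` minimizes `J(·, A)`, `y = S(χ_A u)` is the state and `p = S*(y − y_d)` the adjoint state. -/
def IsSolution {μ : Measure α} [CompleteSpace Y] (S : Lp ℝ 2 μ →L[ℝ] Y) (yd : Y)
    (g : ℝ → ℝ≥0∞) (β : α → ℝ) (A : Set α) (u : Lp ℝ 2 μ) (y : Y) (p : Lp ℝ 2 μ) : Prop :=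
  IsMinimizer S yd g β A u ∧ y = S (chiMul A u) ∧
    p = ContinuousLinearMap.adjoint S (y - yd)

/-- The value function `J(A) = inf_{u ∈ L²} J(u, A)`. -/
def Jval {μ : Measure α} (S : Lp ℝ 2 μ →L[ℝ] Y) (yd : Y) (g : ℝ → ℝ≥0∞) (β : α → ℝ)
    (A : Set α) : EReal :=
  ⨅ u : Lp ℝ 2 μ, Jfun S yd g β u A

/-- `H̄(p) = min_{u ∈ ℝ} (p·u + g(u)) = −g*(−p)`, with values in `EReal`. -/
def Hbar (g : ℝ → ℝ≥0∞) (p : ℝ) : EReal :=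
  ⨅ u : ℝ, ((p * u : ℝ) : EReal) + (g u : EReal)

/-- `H̄(p)` as a real number (it is finite under the standing assumptions). -/
def HbarR (g : ℝ → ℝ≥0∞) (p : ℝ) : ℝ := (Hbar g p).toReal

/-- Absolute value on `EReal`. -/
def eabs (x : EReal) : EReal := max x (-x)

end L0Control

open L0Control


section Aux

variable {α : Type*} [MeasurableSpace α] {μ : MeasureTheory.Measure α}

theorem myAux_chiMul_coeFn {A : Set α} (hA : MeasurableSet A) (u : Lp ℝ 2 μ) :
    (chiMul A u : α → ℝ) =ᵐ[μ] A.indicator (u : α → ℝ) := by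
  rw [chiMul, dif_pos hA]; exact MemLp.coeFn_toLp _

theorem myAux_chiMul_add {A : Set α} (hA : MeasurableSet A) (u v : Lp ℝ 2 μ) :
    chiMul A (u + v) = chiMul A u + chiMul A v := by
  apply Lp.ext
  filter_upwards [myAux_chiMul_coeFn hA (u+v), myAux_chiMul_coeFn hA u, myAux_chiMul_coeFn hA v,
    Lp.coeFn_add u v, Lp.coeFn_add (chiMul A u) (chiMul A v)] with x h1 h2 h3 h4 h5
  rw [h1, h5, Pi.add_apply, h2, h3]
  by_cases hx : x ∈ A
  · rw [Set.indicator_of_mem hx, Set.indicator_of_mem hx, Set.indicator_of_mem hx, h4,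
      Pi.add_apply]
  · rw [Set.indicator_of_notMem hx, Set.indicator_of_notMem hx, Set.indicator_of_notMem hx,
      add_zero]

theorem myAux_chiMul_smul {A : Set α} (hA : MeasurableSet A) (c : ℝ) (u : Lp ℝ 2 μ) :
    chiMul A (c • u) = c • chiMul A u := by
  apply Lp.ext
  filter_upwards [myAux_chiMul_coeFn hA (c • u), myAux_chiMul_coeFn hA u,
    Lp.coeFn_smul c u, Lp.coeFn_smul c (chiMul A u)] with x h1 h2 h3 h4
  rw [h1, h4, Pi.smul_apply, h2]
  by_cases hx : x ∈ A
  · rw [Set.indicator_of_mem hx, Set.indicator_of_mem hx, h3, Pi.smul_apply]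
  · rw [Set.indicator_of_notMem hx, Set.indicator_of_notMem hx, smul_zero]

theorem myAux_chiMul_sub {A : Set α} (hA : MeasurableSet A) (u v : Lp ℝ 2 μ) :
    chiMul A (u - v) = chiMul A u - chiMul A v := by
  have h : u - v = u + (-1 : ℝ) • v := by
    rw [neg_one_smul]; abel
  rw [h, myAux_chiMul_add hA, myAux_chiMul_smul hA, neg_one_smul]; abel

theorem myAux_chiMul_chiMul {A : Set α} (hA : MeasurableSet A) (u : Lp ℝ 2 μ) :
    chiMul A (chiMul A u) = chiMul A u := by
  apply Lp.ext
  filter_upwards [myAux_chiMul_coeFn hA (chiMul A u), myAux_chiMul_coeFn hA u] with x h1 h2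
  rw [h1]
  by_cases hx : x ∈ A
  · rw [Set.indicator_of_mem hx]
  · rw [Set.indicator_of_notMem hx, h2, Set.indicator_of_notMem hx]

theorem myAux_chiMul_norm_le {A : Set α} (hA : MeasurableSet A) (u : Lp ℝ 2 μ) :
    ‖chiMul A u‖ ≤ ‖u‖ := by
  rw [Lp.norm_def, Lp.norm_def]
  apply ENNReal.toReal_mono (Lp.eLpNorm_ne_top u)
  calc eLpNorm (chiMul A u : α → ℝ) 2 μ = eLpNorm (A.indicator (u : α → ℝ)) 2 μ :=
        eLpNorm_congr_ae (myAux_chiMul_coeFn hA u)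
    _ ≤ eLpNorm (u : α → ℝ) 2 μ := eLpNorm_indicator_le _

theorem myAux_lintegral_sq (w : Lp ℝ 2 μ) :
    ∫⁻ x, ENNReal.ofReal ((w x)^2) ∂μ = ENNReal.ofReal (‖w‖^2) := by
  have hsn := eLpNorm_eq_lintegral_rpow_enorm_toReal (f := (w : α → ℝ)) (μ := μ)
    two_ne_zero ENNReal.ofNat_ne_top
  simp only [ENNReal.toReal_ofNat, one_div] at hsn
  set I := ∫⁻ x, ‖(w : α → ℝ) x‖ₑ ^ (2:ℝ) ∂μ with hI
  have hIeq : ∫⁻ x, ENNReal.ofReal ((w x)^2) ∂μ = I := by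
    refine lintegral_congr fun x => ?_
    have h1 : ‖(w : α → ℝ) x‖ₑ = ENNReal.ofReal |(w : α → ℝ) x| := by
      simp [Real.enorm_eq_ofReal_abs]
    rw [h1, ENNReal.ofReal_rpow_of_nonneg (abs_nonneg _) (by norm_num : (0:ℝ) ≤ 2)]
    congr 1
    rw [show ((2:ℝ)) = ((2:ℕ):ℝ) by norm_num, Real.rpow_natCast, sq_abs]
  have hIfin : I ≠ ⊤ := by
    have h := Lp.eLpNorm_ne_top w
    rw [hsn] at h
    intro hc
    rw [hc] at h
    simp at h
  rw [hIeq, Lp.norm_def, hsn, ← ENNReal.toReal_rpow,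
    ← Real.rpow_natCast ((I.toReal) ^ (2⁻¹:ℝ)) 2, ← Real.rpow_mul ENNReal.toReal_nonneg]
  norm_num [ENNReal.ofReal_toReal hIfin]

theorem myAux_ereal_coe_ennreal_eq {x : ℝ≥0∞} (hx : x ≠ ⊤) :
    ((x : EReal)) = ((x.toReal : ℝ) : EReal) := by
  rw [← EReal.coe_toReal (x := (x : EReal)) (by rwa [Ne, EReal.coe_ennreal_eq_top_iff])
    (EReal.coe_ennreal_ne_bot x), EReal.toReal_coe_ennreal]

end Aux

set_option maxHeartbeats 1000000 in
/-- For every Lebesgue measurable set `A ⊆ Ω` there exists a uniquely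
determined minimizer `u_A ∈ L²(Ω)` of `u ↦ J(u, A)`, and it satisfies `χ_A · u_A = u_A`. -/
theorem existence_uniqueness_of_minimizer
    {d : ℕ} {Ω : Set (EuclideanSpace ℝ (Fin d))}
    (hΩm : MeasurableSet Ω) (hΩfin : volume Ω < ⊤)
    {Y : Type*} [NormedAddCommGroup Y] [InnerProductSpace ℝ Y] [CompleteSpace Y]
    (S : Lp ℝ 2 (volume.restrict Ω) →L[ℝ] Y) (yd : Y)
    (g : ℝ → ℝ≥0∞)
    (hg_proper : ∃ u : ℝ, g u ≠ ⊤)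
    (hg_lsc : LowerSemicontinuous g)
    (hg_zero : ∀ u : ℝ, g u = 0 ↔ u = 0)
    (β : EuclideanSpace ℝ (Fin d) → ℝ)
    (hβ : Integrable β (volume.restrict Ω))
    (μ₀ : ℝ) (hμ₀ : 0 < μ₀)
    (hg_sconv : ∀ u v l : ℝ, l ∈ Set.Ioo (0 : ℝ) 1 →
      ENNReal.ofReal (μ₀ / 2 * l * (1 - l) * (u - v) ^ 2) + g (l * u + (1 - l) * v)
        ≤ ENNReal.ofReal l * g u + ENNReal.ofReal (1 - l) * g v)
    (A : Set (EuclideanSpace ℝ (Fin d))) (hAm : MeasurableSet A) (hAΩ : A ⊆ Ω)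
    :
    ∃ uA : Lp ℝ 2 (volume.restrict Ω),
      IsMinimizer S yd g β A uA ∧ chiMul A uA = uA ∧
        ∀ v : Lp ℝ 2 (volume.restrict Ω), IsMinimizer S yd g β A v → v = uA := by
  classical
  set c : ℝ := ∫ x in A, β x ∂(volume.restrict Ω) with hc
  set Qr : Lp ℝ 2 (volume.restrict Ω) → ℝ := fun u => 2⁻¹ * ‖S (chiMul A u) - yd‖ ^ 2 + c with hQr
  set Gf : Lp ℝ 2 (volume.restrict Ω) → ℝ≥0∞ := fun u => ∫⁻ x, g (u x) ∂(volume.restrict Ω) with hGf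
  have hJ : ∀ u : Lp ℝ 2 (volume.restrict Ω), Jfun S yd g β u A = ((Qr u : ℝ) : EReal) + ((Gf u : ℝ≥0∞) : EReal) :=
    fun u => rfl
  clear_value c Qr Gf
  have hgm : Measurable g := hg_lsc.measurable
  have hg0 : g 0 = 0 := (hg_zero 0).mpr rfl
  have hGaem : ∀ u : Lp ℝ 2 (volume.restrict Ω), AEMeasurable (fun x => g (u x)) (volume.restrict Ω) :=
    fun u => hgm.comp_aemeasurable (Lp.aestronglyMeasurable u).aemeasurable
  have hGf0 : Gf (0 : Lp ℝ 2 (volume.restrict Ω)) = 0 := by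
    simp only [hGf]
    have h0 : (fun x => g ((0 : Lp ℝ 2 (volume.restrict Ω)) x)) =ᵐ[volume.restrict Ω]
        fun _ => (0 : ℝ≥0∞) := by
      filter_upwards [Lp.coeFn_zero ℝ 2 (volume.restrict Ω)] with x hx
      rw [hx]; exact hg0
    rw [lintegral_congr_ae h0, lintegral_zero]
  set m : EReal := ⨅ u : Lp ℝ 2 (volume.restrict Ω), Jfun S yd g β u A with hm
  have hmle : m ≤ ((Qr 0 : ℝ) : EReal) := by
    refine iInf_le_of_le 0 ?_
    rw [hJ 0, hGf0]
    simp
  have hmge : ∀ u : Lp ℝ 2 (volume.restrict Ω), ((c : ℝ) : EReal) ≤ Jfun S yd g β u A := by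
    intro u
    rw [hJ u]
    have h1 : ((c : ℝ) : EReal) ≤ ((Qr u : ℝ) : EReal) := by
      apply EReal.coe_le_coe_iff.mpr
      simp only [hQr]
      nlinarith [sq_nonneg ‖S (chiMul A u) - yd‖]
    calc ((c : ℝ) : EReal) = ((c : ℝ) : EReal) + 0 := (add_zero _).symm
      _ ≤ _ := add_le_add h1 (EReal.coe_ennreal_nonneg _)
  have hmtop : m ≠ ⊤ := fun h => by
    rw [h] at hmle; exact absurd hmle (not_le.mpr (EReal.coe_lt_top _))
  have hmbot : m ≠ ⊥ := fun h => by
    have h2 := le_iInf hmge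
    rw [← hm, h] at h2
    exact absurd h2 (not_le.mpr (EReal.bot_lt_coe c))
  obtain ⟨mR, hmR⟩ : ∃ r : ℝ, (r : EReal) = m := ⟨m.toReal, EReal.coe_toReal hmtop hmbot⟩
  -- finite-value extraction
  have hfin : ∀ (u : Lp ℝ 2 (volume.restrict Ω)) (r : ℝ), Jfun S yd g β u A ≤ (r : EReal) →
      Gf u ≠ ⊤ ∧ Qr u + (Gf u).toReal ≤ r := by
    intro u r hr
    rw [hJ u] at hr
    have hGtop : Gf u ≠ ⊤ := by
      intro h
      rw [h, EReal.coe_ennreal_top, EReal.coe_add_top] at hr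
      exact absurd hr (not_le.mpr (EReal.coe_lt_top _))
    refine ⟨hGtop, ?_⟩
    rw [myAux_ereal_coe_ennreal_eq hGtop, ← EReal.coe_add] at hr
    exact EReal.coe_le_coe_iff.mp hr
  -- KEY strong convexity estimate
  have key : ∀ (u v : Lp ℝ 2 (volume.restrict Ω)) (ε : ℝ), 0 < ε →
      Jfun S yd g β u A ≤ ((mR + ε : ℝ) : EReal) →
      Jfun S yd g β v A ≤ ((mR + ε : ℝ) : EReal) →
      ‖u - v‖ ^ 2 ≤ 8 / μ₀ * ε := by
    intro u v ε hε hu hv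
    obtain ⟨hGu, hqu⟩ := hfin u _ hu
    obtain ⟨hGv, hqv⟩ := hfin v _ hv
    set w : Lp ℝ 2 (volume.restrict Ω) := (2⁻¹ : ℝ) • (u + v) with hw
    clear_value w
    have hSw : S (chiMul A w) = (2⁻¹:ℝ) • (S (chiMul A u) + S (chiMul A v)) := by
      rw [hw, myAux_chiMul_smul hAm, myAux_chiMul_add hAm, _root_.map_smul, _root_.map_add]
    have hQw : Qr w ≤ 2⁻¹ * Qr u + 2⁻¹ * Qr v := by
      have hsplit : (2⁻¹:ℝ) • (S (chiMul A u) + S (chiMul A v)) - yd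
          = (2⁻¹:ℝ) • (S (chiMul A u) - yd) + (2⁻¹:ℝ) • (S (chiMul A v) - yd) := by
        module
      have h1 : ‖S (chiMul A w) - yd‖
          ≤ 2⁻¹ * ‖S (chiMul A u) - yd‖ + 2⁻¹ * ‖S (chiMul A v) - yd‖ := by
        rw [hSw, hsplit]
        calc ‖_ + _‖ ≤ ‖(2⁻¹:ℝ) • (S (chiMul A u) - yd)‖ + ‖(2⁻¹:ℝ) • (S (chiMul A v) - yd)‖ :=
              norm_add_le _ _
          _ = 2⁻¹ * ‖S (chiMul A u) - yd‖ + 2⁻¹ * ‖S (chiMul A v) - yd‖ := by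
              rw [norm_smul, norm_smul]; norm_num
      have h2 : ‖S (chiMul A w) - yd‖^2
          ≤ (2⁻¹ * ‖S (chiMul A u) - yd‖ + 2⁻¹ * ‖S (chiMul A v) - yd‖)^2 :=
        pow_le_pow_left₀ (norm_nonneg _) h1 2
      simp only [hQr]
      nlinarith [sq_nonneg (‖S (chiMul A u) - yd‖ - ‖S (chiMul A v) - yd‖)]
    have hwae : ∀ᵐ x ∂(volume.restrict Ω), (w : _ → ℝ) x = 2⁻¹ * (u x) + (1 - 2⁻¹) * (v x) := by
      filter_upwards [Lp.coeFn_smul (2⁻¹:ℝ) (u+v), Lp.coeFn_add u v] with x h1 h2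
      rw [hw, h1, Pi.smul_apply, h2, Pi.add_apply, smul_eq_mul]
      ring
    have hpt : ∀ᵐ x ∂(volume.restrict Ω),
        ENNReal.ofReal (μ₀/8) * ENNReal.ofReal ((u x - v x)^2) + g (w x)
          ≤ ENNReal.ofReal 2⁻¹ * g (u x) + ENNReal.ofReal (1 - 2⁻¹) * g (v x) := by
      filter_upwards [hwae] with x hx
      have h := hg_sconv (u x) (v x) 2⁻¹ ⟨by norm_num, by norm_num⟩
      rw [hx]
      refine le_trans (le_of_eq ?_) h
      congr 1
      rw [← ENNReal.ofReal_mul (by positivity)]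
      congr 1
      ring
    have hG1 : ENNReal.ofReal (μ₀/8) * ENNReal.ofReal (‖u - v‖^2) + Gf w
        ≤ ENNReal.ofReal 2⁻¹ * Gf u + ENNReal.ofReal (1 - 2⁻¹) * Gf v := by
      have hmono := lintegral_mono_ae hpt
      have haem2 : AEMeasurable (fun x => ENNReal.ofReal ((u x - v x)^2)) (volume.restrict Ω) :=
        ENNReal.measurable_ofReal.comp_aemeasurable
          (((Lp.aestronglyMeasurable u).aemeasurable.sub
            (Lp.aestronglyMeasurable v).aemeasurable).pow_const 2)
      have haem1 : AEMeasurable (fun x => ENNReal.ofReal (μ₀/8) * ENNReal.ofReal ((u x - v x)^2)) (volume.restrict Ω) :=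
        haem2.const_mul _
      have hL : ∫⁻ x, (ENNReal.ofReal (μ₀/8) * ENNReal.ofReal ((u x - v x)^2) + g (w x)) ∂(volume.restrict Ω)
          = ENNReal.ofReal (μ₀/8) * ENNReal.ofReal (‖u-v‖^2) + Gf w := by
        simp only [hGf]
        rw [lintegral_add_left' haem1]
        congr 1
        rw [lintegral_const_mul'' _ haem2]
        congr 1
        rw [← myAux_lintegral_sq (u - v)]
        refine lintegral_congr_ae ?_
        filter_upwards [Lp.coeFn_sub u v] with x hx
        rw [hx, Pi.sub_apply]
      have hR : ∫⁻ x, (ENNReal.ofReal 2⁻¹ * g (u x) + ENNReal.ofReal (1 - 2⁻¹) * g (v x)) ∂(volume.restrict Ω)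
          = ENNReal.ofReal 2⁻¹ * Gf u + ENNReal.ofReal (1 - 2⁻¹) * Gf v := by
        simp only [hGf]
        rw [lintegral_add_left' ((hGaem u).const_mul _), lintegral_const_mul'' _ (hGaem u),
          lintegral_const_mul'' _ (hGaem v)]
      rw [hL, hR] at hmono
      exact hmono
    have hRfin : ENNReal.ofReal 2⁻¹ * Gf u + ENNReal.ofReal (1 - 2⁻¹) * Gf v ≠ ⊤ :=
      ENNReal.add_ne_top.mpr ⟨ENNReal.mul_ne_top ENNReal.ofReal_ne_top hGu,
        ENNReal.mul_ne_top ENNReal.ofReal_ne_top hGv⟩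
    have hGw : Gf w ≠ ⊤ := ne_top_of_le_ne_top hRfin (le_add_self.trans hG1)
    have hreal : μ₀/8 * ‖u-v‖^2 + (Gf w).toReal
        ≤ 2⁻¹ * (Gf u).toReal + 2⁻¹ * (Gf v).toReal := by
      have h := ENNReal.toReal_mono hRfin hG1
      rw [ENNReal.toReal_add (ENNReal.mul_ne_top ENNReal.ofReal_ne_top ENNReal.ofReal_ne_top) hGw,
        ENNReal.toReal_add (ENNReal.mul_ne_top ENNReal.ofReal_ne_top hGu)
          (ENNReal.mul_ne_top ENNReal.ofReal_ne_top hGv),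
        ENNReal.toReal_mul, ENNReal.toReal_mul, ENNReal.toReal_mul,
        ENNReal.toReal_ofReal (by positivity : (0:ℝ) ≤ μ₀/8),
        ENNReal.toReal_ofReal (by positivity : (0:ℝ) ≤ ‖u-v‖^2),
        ENNReal.toReal_ofReal (by norm_num : (0:ℝ) ≤ 2⁻¹),
        ENNReal.toReal_ofReal (by norm_num : (0:ℝ) ≤ 1 - 2⁻¹)] at h
      norm_num at h ⊢
      linarith
    have hmw : mR ≤ Qr w + (Gf w).toReal := by
      have h := iInf_le (fun u : Lp ℝ 2 (volume.restrict Ω) => Jfun S yd g β u A) w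
      rw [← hm, hJ w, myAux_ereal_coe_ennreal_eq hGw, ← EReal.coe_add, ← hmR] at h
      exact EReal.coe_le_coe_iff.mp h
    have hstep : μ₀/8 * ‖u-v‖^2 ≤ ε := by linarith
    calc ‖u - v‖^2 = (μ₀/8 * ‖u-v‖^2) * (8/μ₀) := by field_simp
      _ ≤ ε * (8/μ₀) := mul_le_mul_of_nonneg_right hstep (by positivity)
      _ = 8/μ₀ * ε := by ring
  -- minimizing sequence
  have hexists : ∀ n : ℕ, ∃ u : Lp ℝ 2 (volume.restrict Ω),
      Jfun S yd g β u A ≤ ((mR + 1/(n+1) : ℝ) : EReal) := by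
    intro n
    have hlt : m < ((mR + 1/(n+1) : ℝ) : EReal) := by
      rw [← hmR]
      refine EReal.coe_lt_coe_iff.mpr ?_
      have hp : (0:ℝ) < 1/((n:ℝ)+1) := by positivity
      linarith
    rw [hm] at hlt
    obtain ⟨u0, hu0⟩ := iInf_lt_iff.mp hlt
    exact ⟨u0, hu0.le⟩
  choose u hu using hexists
  have hubd : ∀ N n : ℕ, N ≤ n → Jfun S yd g β (u n) A ≤ ((mR + 1/(N+1) : ℝ) : EReal) := by
    intro N n hNn
    refine (hu n).trans (EReal.coe_le_coe_iff.mpr ?_)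
    have : (1:ℝ)/(n+1) ≤ 1/(N+1) := by
      apply one_div_le_one_div_of_le (by positivity)
      exact_mod_cast Nat.succ_le_succ hNn
    linarith
  have hcau : CauchySeq u := by
    apply cauchySeq_of_le_tendsto_0 (fun N : ℕ => Real.sqrt (8/μ₀ * (1/((N:ℝ)+1))))
    · intro n k N hn hk
      have h := key (u n) (u k) (1/(N+1)) (by positivity) (hubd N n hn) (hubd N k hk)
      rw [dist_eq_norm]
      calc ‖u n - u k‖ = Real.sqrt (‖u n - u k‖^2) := (Real.sqrt_sq (norm_nonneg _)).symm
        _ ≤ _ := Real.sqrt_le_sqrt h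
    · have h0 : Tendsto (fun N : ℕ => 8/μ₀ * (1/((N:ℝ)+1))) atTop (𝓝 0) := by
        rw [show (0:ℝ) = 8/μ₀ * 0 by ring]
        exact tendsto_one_div_add_atTop_nhds_zero_nat.const_mul _
      have := (Real.continuous_sqrt.tendsto 0).comp h0
      simpa [Function.comp_def] using this
  obtain ⟨uA, hlim⟩ := cauchySeq_tendsto_of_complete hcau
  -- a.e. convergent subsequence
  have heL : Tendsto (fun n => eLpNorm ((u n : _ → ℝ) - (uA : _ → ℝ)) 2 (volume.restrict Ω)) atTop (𝓝 0) := by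
    have h1 : Tendsto (fun n => ‖u n - uA‖) atTop (𝓝 0) :=
      (tendsto_iff_norm_sub_tendsto_zero.mp hlim)
    have h2 : Tendsto (fun n => ENNReal.ofReal ‖u n - uA‖) atTop (𝓝 0) := by
      have := ENNReal.tendsto_ofReal h1
      simpa using this
    refine h2.congr fun n => ?_
    rw [Lp.norm_def, ENNReal.ofReal_toReal (Lp.eLpNorm_ne_top _)]
    exact eLpNorm_congr_ae (Lp.coeFn_sub (u n) uA)
  have htm := tendstoInMeasure_of_tendsto_eLpNorm (two_ne_zero)
    (fun n => Lp.aestronglyMeasurable (u n)) (Lp.aestronglyMeasurable uA) heL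
  obtain ⟨ns, hns, hae⟩ := htm.exists_seq_tendsto_ae
  have hlim2 : Tendsto (fun k => u (ns k)) atTop (𝓝 uA) :=
    hlim.comp hns.tendsto_atTop
  -- Q part converges
  have hchiT : Tendsto (fun k => chiMul A (u (ns k))) atTop (𝓝 (chiMul A uA)) := by
    rw [tendsto_iff_dist_tendsto_zero]
    apply squeeze_zero (fun k => dist_nonneg) (fun k => ?_)
      ((tendsto_iff_dist_tendsto_zero.mp hlim2))
    rw [dist_eq_norm, dist_eq_norm, ← myAux_chiMul_sub hAm]
    exact myAux_chiMul_norm_le hAm _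
  have hQT : Tendsto (fun k => Qr (u (ns k))) atTop (𝓝 (Qr uA)) := by
    simp only [hQr]
    exact ((((S.continuous.tendsto _).comp hchiT).sub_const yd).norm.pow 2).const_mul 2⁻¹
      |>.add_const c
  -- Fatou
  have hfatou : Gf uA ≤ liminf (fun k => Gf (u (ns k))) atTop := by
    have hae' : ∀ᵐ x ∂(volume.restrict Ω), g (uA x) ≤ liminf (fun k => g (u (ns k) x)) atTop := by
      filter_upwards [hae] with x hx
      have hls := hg_lsc (uA x)
      rw [le_liminf_iff]
      intro y hy
      exact hx.eventually (hls y hy)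
    simp only [hGf]
    calc ∫⁻ x, g (uA x) ∂(volume.restrict Ω)
        ≤ ∫⁻ x, liminf (fun k => g (u (ns k) x)) atTop ∂(volume.restrict Ω) :=
          lintegral_mono_ae hae'
      _ ≤ liminf (fun k => ∫⁻ x, g (u (ns k) x) ∂(volume.restrict Ω)) atTop :=
          lintegral_liminf_le' (fun k => hGaem (u (ns k)))
  have hGbd : ∀ n : ℕ, Gf (u n) ≤ ENNReal.ofReal (mR + 1/(n+1) - Qr (u n)) := by
    intro n
    obtain ⟨hfin', hq⟩ := hfin (u n) _ (hu n)
    rw [← ENNReal.ofReal_toReal hfin']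
    exact ENNReal.ofReal_le_ofReal (by linarith)
  have hetaT : Tendsto (fun k => (1:ℝ)/((ns k : ℝ)+1)) atTop (𝓝 0) :=
    tendsto_one_div_add_atTop_nhds_zero_nat.comp hns.tendsto_atTop
  have hQlim : Tendsto (fun k => mR + 1/((ns k : ℝ)+1) - Qr (u (ns k))) atTop
      (𝓝 (mR - Qr uA)) := by
    have := ((tendsto_const_nhds (x := mR)).add hetaT).sub hQT
    simpa using this
  have hliminf2 : liminf (fun k => Gf (u (ns k))) atTop ≤ ENNReal.ofReal (mR - Qr uA) := by
    have hT : Tendsto (fun k => ENNReal.ofReal (mR + 1/((ns k : ℝ)+1) - Qr (u (ns k)))) atTop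
        (𝓝 (ENNReal.ofReal (mR - Qr uA))) := ENNReal.tendsto_ofReal hQlim
    calc liminf (fun k => Gf (u (ns k))) atTop
        ≤ liminf (fun k => ENNReal.ofReal (mR + 1/((ns k : ℝ)+1) - Qr (u (ns k)))) atTop :=
          liminf_le_liminf (Filter.Eventually.of_forall fun k => hGbd (ns k))
      _ = ENNReal.ofReal (mR - Qr uA) := hT.liminf_eq
  have hpos : 0 ≤ mR - Qr uA := by
    refine ge_of_tendsto' hQlim fun k => ?_
    obtain ⟨hfin', hq⟩ := hfin (u (ns k)) _ (hu (ns k))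
    have := ENNReal.toReal_nonneg (a := Gf (u (ns k)))
    linarith
  have hJuA : Jfun S yd g β uA A ≤ m := by
    rw [hJ uA, ← hmR]
    calc ((Qr uA : ℝ) : EReal) + ((Gf uA : ℝ≥0∞) : EReal)
        ≤ ((Qr uA : ℝ) : EReal) + ((ENNReal.ofReal (mR - Qr uA) : ℝ≥0∞) : EReal) :=
          add_le_add (le_refl _) (EReal.coe_ennreal_le_coe_ennreal_iff.mpr
            (hfatou.trans hliminf2))
      _ = ((Qr uA + (mR - Qr uA) : ℝ) : EReal) := by
          rw [EReal.coe_ennreal_ofReal, max_eq_left hpos]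
          norm_cast
      _ = ((mR : ℝ) : EReal) := by norm_num
  have hmin : IsMinimizer S yd g β A uA := fun v =>
    hJuA.trans (iInf_le (fun u : Lp ℝ 2 (volume.restrict Ω) => Jfun S yd g β u A) v)
  have hJm : Jfun S yd g β uA A = m :=
    le_antisymm hJuA (iInf_le (fun u : Lp ℝ 2 (volume.restrict Ω) => Jfun S yd g β u A) uA)
  have huniq : ∀ v : Lp ℝ 2 (volume.restrict Ω), IsMinimizer S yd g β A v → v = uA := by
    intro v hv
    have hJv : Jfun S yd g β v A = m :=
      le_antisymm ((hv uA).trans_eq hJm) (iInf_le (fun u : Lp ℝ 2 (volume.restrict Ω) => Jfun S yd g β u A) v)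
    have hsq : ∀ ε : ℝ, 0 < ε → ‖v - uA‖^2 ≤ 8/μ₀ * ε := by
      intro ε hε
      refine key v uA ε hε ?_ ?_
      · rw [hJv, ← hmR]; exact EReal.coe_le_coe_iff.mpr (by linarith)
      · rw [hJm, ← hmR]; exact EReal.coe_le_coe_iff.mpr (by linarith)
    have hle0 : ‖v - uA‖^2 ≤ 0 := by
      by_contra hcon
      push_neg at hcon
      have h := hsq (μ₀/8 * (‖v-uA‖^2/2)) (by positivity)
      have h8 : 8/μ₀ * (μ₀/8 * (‖v-uA‖^2/2)) = ‖v-uA‖^2/2 := by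
        field_simp
      rw [h8] at h
      linarith
    have h0 : ‖v - uA‖ = 0 := by nlinarith [norm_nonneg (v - uA), sq_nonneg ‖v - uA‖]
    exact sub_eq_zero.mp (norm_eq_zero.mp h0)
  have hchi : chiMul A uA = uA := by
    apply huniq
    intro v'
    have hQeq : Qr (chiMul A uA) = Qr uA := by
      simp only [hQr]
      rw [myAux_chiMul_chiMul hAm]
    have hGle : Gf (chiMul A uA) ≤ Gf uA := by
      simp only [hGf]
      apply lintegral_mono_ae
      filter_upwards [myAux_chiMul_coeFn hAm uA] with x hx
      rw [hx]
      by_cases hxA : x ∈ A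
      · rw [Set.indicator_of_mem hxA]
      · rw [Set.indicator_of_notMem hxA, hg0]; exact zero_le
    have hle : Jfun S yd g β (chiMul A uA) A ≤ Jfun S yd g β uA A := by
      rw [hJ, hJ, hQeq]
      exact add_le_add (le_refl _) (EReal.coe_ennreal_le_coe_ennreal_iff.mpr hGle)
    exact hle.trans (hmin v')
  exact ⟨uA, hmin, hchi, huniq⟩
end
end

section
/- Let A ⊆ Ω be measurable, let u_A be a minimizer of u ↦ J(u,A) over L²(Ω), and let p_A := S*(S(χ_A·u_A) − y_d). Then −χ_A(x)·p_A(x) ∈ ∂g(u_A(x)) for almost all x ∈ Ω, where ∂g denotes the convex subdifferential of g; equivalently, u_A(x) is a minimizer over u ∈ ℝ of the function u ↦ χ_A(x)·p_A(x)·u + g(u) for almost all x ∈ Ω. -/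
open MeasureTheory ENNReal Set Filter Metric Topology
open scoped Classical symmDiff NNReal

noncomputable section

open L0Control

lemma ennreal_coe_ereal_eq {c : ℝ≥0∞} (hc : c ≠ ⊤) :
    (c : EReal) = ((c.toReal : ℝ) : EReal) := by
  conv_lhs => rw [← ENNReal.ofReal_toReal hc]
  rw [EReal.coe_ennreal_ofReal, max_eq_left ENNReal.toReal_nonneg]

lemma ereal_le_real {r s : ℝ} {c d : ℝ≥0∞} (hc : c ≠ ⊤) (hd : d ≠ ⊤)
    (h : (r : EReal) + (c : EReal) ≤ (s : EReal) + (d : EReal)) :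
    r + c.toReal ≤ s + d.toReal := by
  rw [ennreal_coe_ereal_eq hc, ennreal_coe_ereal_eq hd, ← EReal.coe_add, ← EReal.coe_add,
    EReal.coe_le_coe_iff] at h
  exact h

section Aux

variable {α : Type*} [MeasurableSpace α] {μ : Measure α} [IsFiniteMeasure μ]
  {Y : Type*} [NormedAddCommGroup Y] [InnerProductSpace ℝ Y] [CompleteSpace Y]

lemma chiMul_coeFn (A : Set α) (hA : MeasurableSet A) (u : Lp ℝ 2 μ) :
    ⇑(chiMul A u) =ᵐ[μ] A.indicator ⇑u := by
  unfold chiMul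
  rw [dif_pos hA]
  exact MemLp.coeFn_toLp _

lemma Gfin_of_isMinimizer (S : Lp ℝ 2 μ →L[ℝ] Y) (yd : Y) (g : ℝ → ℝ≥0∞) (β : α → ℝ)
    (hg0 : g 0 = 0) (A : Set α)
    (uA : Lp ℝ 2 μ) (huA : IsMinimizer S yd g β A uA) :
    ∫⁻ x, g (uA x) ∂μ ≠ ⊤ := by
  have h0 := huA 0
  have hz : (∫⁻ x, g ((0 : Lp ℝ 2 μ) x) ∂μ) = 0 := by
    have : ∀ᵐ x ∂μ, g ((0 : Lp ℝ 2 μ) x) = 0 := by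
      filter_upwards [Lp.coeFn_zero (E := ℝ) (p := 2) (μ := μ)] with x hx
      rw [hx]; exact hg0
    rw [lintegral_congr_ae this, lintegral_const, zero_mul]
  simp only [Jfun] at h0
  rw [hz] at h0
  intro htop
  rw [htop] at h0
  simp only [EReal.coe_ennreal_top, EReal.coe_ennreal_zero, add_zero] at h0
  rw [EReal.coe_add_top] at h0
  have h1 : ((2⁻¹ * ‖S (chiMul A 0) - yd‖ ^ 2 + ∫ x in A, β x ∂μ : ℝ) : EReal) ≠ ⊤ :=
    EReal.coe_ne_top _
  rw [top_le_iff] at h0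
  exact h1 h0

lemma key_measure_zero (S : Lp ℝ 2 μ →L[ℝ] Y) (yd : Y) (g : ℝ → ℝ≥0∞) (β : α → ℝ)
    (hgm : Measurable g)
    (hg_conv : ∀ u v l : ℝ, l ∈ Set.Ioo (0 : ℝ) 1 →
      g (l * u + (1 - l) * v) ≤ ENNReal.ofReal l * g u + ENNReal.ofReal (1 - l) * g v)
    (A : Set α) (hAm : MeasurableSet A)
    (uA pA : Lp ℝ 2 μ)
    (huA : IsMinimizer S yd g β A uA)
    (hpA : pA = ContinuousLinearMap.adjoint S (S (chiMul A uA) - yd))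
    (hGfin : ∫⁻ x, g (uA x) ∂μ ≠ ⊤)
    (q ε : ℝ) (hq : g q ≠ ⊤) (hε : 0 < ε) :
    μ {x | (g q).toReal + ε ≤ (g (uA x)).toReal + (-(chi A x * pA x)) * (q - uA x)
        ∧ g (uA x) ≠ ⊤} = 0 := by
  classical
  have hum : Measurable (⇑uA) := (Lp.stronglyMeasurable uA).measurable
  have hpm : Measurable (⇑pA) := (Lp.stronglyMeasurable pA).measurable
  have hgum : Measurable fun x => g (uA x) := hgm.comp hum
  have hchim : Measurable (chi A) := measurable_const.indicator hAm
  set E : Set α := {x | (g q).toReal + ε ≤ (g (uA x)).toReal + (-(chi A x * pA x)) * (q - uA x)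
        ∧ g (uA x) ≠ ⊤} with hEdef
  have hEm : MeasurableSet E := by
    rw [hEdef, Set.setOf_and]
    refine MeasurableSet.inter (measurableSet_le measurable_const ?_) ?_
    · exact (ENNReal.measurable_toReal.comp hgum).add
        (((hchim.mul hpm).neg).mul (measurable_const.sub hum))
    · exact (hgum (measurableSet_singleton ⊤)).compl
  by_contra hne
  have hEpos : 0 < μ E := pos_iff_ne_zero.mpr hne
  have hEfin : μ E ≠ ⊤ := measure_ne_top μ E
  set m : ℝ := (μ E).toReal with hm
  have hm0 : 0 < m := ENNReal.toReal_pos hne hEfin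
  clear_value m
  have hmem_ind : MemLp (E.indicator fun x => q - uA x) 2 μ :=
    ((memLp_const q).sub (Lp.memLp uA)).indicator hEm
  have hmem_indA : MemLp ((A ∩ E).indicator fun x => q - uA x) 2 μ :=
    ((memLp_const q).sub (Lp.memLp uA)).indicator (hAm.inter hEm)
  set eInd : Lp ℝ 2 μ := hmem_ind.toLp _ with heInd
  set eIndA : Lp ℝ 2 μ := hmem_indA.toLp _ with heIndA
  set z : Y := S (chiMul A uA) - yd with hz
  set bb : Y := S eIndA with hbb
  set K : ℝ := 2⁻¹ * ‖bb‖ ^ 2 with hK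
  have hK0 : 0 ≤ K := by rw [hK]; positivity
  clear_value K
  set LE : ℝ≥0∞ := ∫⁻ x in E, g (uA x) ∂μ with hLE
  set LEc : ℝ≥0∞ := ∫⁻ x in Eᶜ, g (uA x) ∂μ with hLEc
  have hsplit : LE + LEc = ∫⁻ x, g (uA x) ∂μ := lintegral_add_compl _ hEm
  have hLE_fin : LE ≠ ⊤ := by
    intro h
    rw [← hsplit, h, top_add] at hGfin
    exact hGfin rfl
  have hLEc_fin : LEc ≠ ⊤ := by
    intro h
    rw [← hsplit, h, add_top] at hGfin
    exact hGfin rfl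
  set a : ℝ := LE.toReal with ha
  set b' : ℝ := LEc.toReal with hb'
  have hGA : (∫⁻ x, g (uA x) ∂μ).toReal = a + b' := by
    rw [← hsplit, ENNReal.toReal_add hLE_fin hLEc_fin]
  have haE : ∫ x in E, (g (uA x)).toReal ∂μ = a := by
    rw [ha, hLE]
    exact integral_toReal (hgum.aemeasurable.restrict)
      ((ae_restrict_mem hEm).mono fun x hx => lt_top_iff_ne_top.mpr hx.2)
  have hpA_int : Integrable (⇑pA) μ := (Lp.memLp pA).integrable one_le_two
  have hpu_int : Integrable (fun x => pA x * uA x) μ := by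
    have h := L2.integrable_inner (𝕜 := ℝ) pA uA
    simpa [mul_comm] using h
  have hbase_int : Integrable (fun x => pA x * (q - uA x)) μ := by
    have he : (fun x => pA x * (q - uA x)) = fun x => q * pA x - pA x * uA x := by
      funext x; ring
    rw [he]
    exact (hpA_int.const_mul q).sub hpu_int
  have hindA_int : Integrable (A.indicator fun x => pA x * (q - uA x)) μ :=
    hbase_int.indicator hAm
  have htoReal_int : IntegrableOn (fun x => (g (uA x)).toReal) E μ := by
    refine integrable_toReal_of_lintegral_ne_top hgum.aemeasurable.restrict ?_
    exact hLE ▸ hLE_fin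
  have hconst_int : IntegrableOn (fun _ => (g q).toReal + ε) E μ :=
    integrableOn_const hEfin
  have hinner : (inner ℝ pA eIndA : ℝ) = ∫ x in E, A.indicator (fun x => pA x * (q - uA x)) x ∂μ := by
    rw [L2.inner_def]
    have h1 : (fun x => (inner ℝ (pA x) (eIndA x) : ℝ))
        =ᵐ[μ] fun x => (A ∩ E).indicator (fun x => pA x * (q - uA x)) x := by
      filter_upwards [hmem_indA.coeFn_toLp] with x hx
      simp only [RCLike.inner_apply, conj_trivial]
      rw [hx]
      by_cases hmem : x ∈ A ∩ E
      · rw [Set.indicator_of_mem hmem, Set.indicator_of_mem hmem, mul_comm]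
      · rw [Set.indicator_of_notMem hmem, Set.indicator_of_notMem hmem, zero_mul]
    rw [integral_congr_ae h1, integral_indicator (hAm.inter hEm), Set.inter_comm,
      ← setIntegral_indicator hAm]
  have hIbound : (inner ℝ pA eIndA : ℝ) ≤ a - ((g q).toReal + ε) * m := by
    rw [hinner]
    have hmono : ∫ x in E, A.indicator (fun x => pA x * (q - uA x)) x ∂μ
        ≤ ∫ x in E, ((g (uA x)).toReal - ((g q).toReal + ε)) ∂μ := by
      refine setIntegral_mono_on hindA_int.integrableOn (htoReal_int.sub hconst_int) hEm ?_
      intro x hx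
      have h1 : (g q).toReal + ε ≤ (g (uA x)).toReal + (-(chi A x * pA x)) * (q - uA x) :=
        hx.1
      by_cases hxA : x ∈ A
      · rw [Set.indicator_of_mem hxA]
        have hc : chi A x = 1 := by simp [chi, Set.indicator_of_mem hxA]
        rw [hc] at h1
        nlinarith [h1]
      · rw [Set.indicator_of_notMem hxA]
        have hc : chi A x = 0 := by simp [chi, Set.indicator_of_notMem hxA]
        rw [hc] at h1
        nlinarith [h1]
    refine hmono.trans ?_
    rw [integral_sub htoReal_int hconst_int, haE, setIntegral_const, smul_eq_mul]
    rw [measureReal_def, ← hm]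
    ring_nf
    exact le_refl _
  have main : ∀ t : ℝ, 0 < t → t < 1 → 0 ≤ -(t * ε * m) + t ^ 2 * K := by
    intro t ht0 ht1
    set w : Lp ℝ 2 μ := uA + t • eInd with hw
    have hw_ae : ⇑w =ᵐ[μ] fun x => uA x + t * E.indicator (fun x => q - uA x) x := by
      filter_upwards [Lp.coeFn_add uA (t • eInd), Lp.coeFn_smul t eInd,
        hmem_ind.coeFn_toLp] with x h1 h2 h3
      simp only [Pi.add_apply] at h1
      simp only [Pi.smul_apply, smul_eq_mul] at h2
      rw [hw]
      rw [h1, h2, h3]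
    have hchiw : chiMul A w = chiMul A uA + t • eIndA := by
      apply Lp.ext
      have h2 : ⇑(chiMul A uA + t • eIndA) =ᵐ[μ]
          fun x => A.indicator (⇑uA) x + t * (A ∩ E).indicator (fun x => q - uA x) x := by
        filter_upwards [Lp.coeFn_add (chiMul A uA) (t • eIndA), Lp.coeFn_smul t eIndA,
          hmem_indA.coeFn_toLp, chiMul_coeFn A hAm uA] with x h1 h2 h3 h4
        simp only [Pi.add_apply] at h1
        simp only [Pi.smul_apply, smul_eq_mul] at h2
        rw [h1, h2, h3, h4]
      refine ((chiMul_coeFn A hAm w).trans ?_).trans h2.symm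
      filter_upwards [hw_ae] with x hx
      by_cases hxA : x ∈ A
      · rw [Set.indicator_of_mem hxA, hx, Set.indicator_of_mem hxA]
        by_cases hxE : x ∈ E
        · rw [Set.indicator_of_mem hxE, Set.indicator_of_mem (Set.mem_inter hxA hxE)]
        · rw [Set.indicator_of_notMem hxE,
            Set.indicator_of_notMem (fun h : x ∈ A ∩ E => hxE h.2)]
      · rw [Set.indicator_of_notMem hxA, Set.indicator_of_notMem hxA,
          Set.indicator_of_notMem (fun h : x ∈ A ∩ E => hxA h.1)]
        ring
    have hSw : S (chiMul A w) - yd = z + t • bb := by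
      rw [hchiw, map_add, _root_.map_smul, hz, hbb]
      abel
    have hzb : (inner ℝ pA eIndA : ℝ) = (inner ℝ z bb : ℝ) := by
      rw [hpA, hbb]
      exact ContinuousLinearMap.adjoint_inner_left S eIndA z
    have hnorm : ‖S (chiMul A w) - yd‖ ^ 2
        = ‖z‖ ^ 2 + 2 * (t * (inner ℝ pA eIndA : ℝ)) + t ^ 2 * ‖bb‖ ^ 2 := by
      rw [hSw, norm_add_sq_real, real_inner_smul_right, norm_smul, hzb,
        Real.norm_eq_abs, abs_of_pos ht0]
      ring
    have hgw_le : ∫⁻ x, g (w x) ∂μ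
        ≤ ENNReal.ofReal (1 - t) * LE + ENNReal.ofReal t * g q * μ E + LEc := by
      have e1 : ∫⁻ x, g (w x) ∂μ = (∫⁻ x in E, g (uA x + t * (q - uA x)) ∂μ) + LEc := by
        have hcongr : (fun x => g (w x)) =ᵐ[μ]
            fun x => g (uA x + t * E.indicator (fun x => q - uA x) x) :=
          hw_ae.mono fun x hx => congrArg g hx
        rw [lintegral_congr_ae hcongr]
        rw [← lintegral_add_compl
          (fun x => g (uA x + t * E.indicator (fun x => q - uA x) x)) hEm]
        congr 1
        · refine setLIntegral_congr_fun_ae hEm (ae_of_all _ fun x hx => ?_)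
          rw [Set.indicator_of_mem hx]
        · refine setLIntegral_congr_fun_ae hEm.compl (ae_of_all _ fun x hx => ?_)
          rw [Set.indicator_of_notMem hx, mul_zero, add_zero]
      rw [e1]
      refine add_le_add ?_ le_rfl
      calc ∫⁻ x in E, g (uA x + t * (q - uA x)) ∂μ
          ≤ ∫⁻ x in E, (ENNReal.ofReal (1 - t) * g (uA x) + ENNReal.ofReal t * g q) ∂μ := by
            refine lintegral_mono fun x => ?_
            have h := hg_conv (uA x) q (1 - t) ⟨by linarith, by linarith⟩
            have e2 : (1 - t) * uA x + (1 - (1 - t)) * q = uA x + t * (q - uA x) := by ring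
            have e3 : (1:ℝ) - (1 - t) = t := by ring
            rw [e2, e3] at h
            exact h
        _ = ENNReal.ofReal (1 - t) * LE + ENNReal.ofReal t * g q * μ E := by
            rw [lintegral_add_right _ measurable_const, lintegral_const_mul _ hgum,
              setLIntegral_const, hLE]
    have h1' : ENNReal.ofReal (1 - t) * LE ≠ ⊤ :=
      ENNReal.mul_ne_top ENNReal.ofReal_ne_top hLE_fin
    have h2' : ENNReal.ofReal t * g q * μ E ≠ ⊤ :=
      ENNReal.mul_ne_top (ENNReal.mul_ne_top ENNReal.ofReal_ne_top hq) (measure_ne_top μ E)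
    have hX_fin : ENNReal.ofReal (1 - t) * LE + ENNReal.ofReal t * g q * μ E + LEc ≠ ⊤ :=
      ENNReal.add_ne_top.mpr ⟨ENNReal.add_ne_top.mpr ⟨h1', h2'⟩, hLEc_fin⟩
    have hgw_fin : ∫⁻ x, g (w x) ∂μ ≠ ⊤ := ne_top_of_le_ne_top hX_fin hgw_le
    have hgw_toReal : (∫⁻ x, g (w x) ∂μ).toReal ≤ (1 - t) * a + t * ((g q).toReal * m) + b' := by
      refine le_trans (ENNReal.toReal_mono hX_fin hgw_le) ?_
      rw [ENNReal.toReal_add (ENNReal.add_ne_top.mpr ⟨h1', h2'⟩) hLEc_fin,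
        ENNReal.toReal_add h1' h2', ENNReal.toReal_mul, ENNReal.toReal_mul,
        ENNReal.toReal_mul, ENNReal.toReal_ofReal (by linarith : (0:ℝ) ≤ 1 - t),
        ENNReal.toReal_ofReal ht0.le]
      rw [← ha, ← hb', ← hm]
      ring_nf
      exact le_refl _
    have hmin := huA w
    simp only [Jfun] at hmin
    rw [← hz] at hmin
    have hreal := ereal_le_real hGfin hgw_fin hmin
    rw [hGA, hnorm] at hreal
    have hI' : t * (inner ℝ pA eIndA : ℝ) ≤ t * (a - ((g q).toReal + ε) * m) :=
      mul_le_mul_of_nonneg_left hIbound ht0.le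
    rw [hK]
    linarith [hreal, hgw_toReal, hI']
  have hK1 : (0:ℝ) < K + 1 := by linarith
  obtain ⟨t0, ht0pos, ht0lt1, ht0le⟩ : ∃ t0 : ℝ, 0 < t0 ∧ t0 < 1 ∧ t0 ≤ ε * m / (2 * (K + 1)) :=
    ⟨min (1/2) (ε * m / (2 * (K + 1))),
      lt_min (by norm_num) (div_pos (mul_pos hε hm0) (by linarith)),
      lt_of_le_of_lt (min_le_left _ _) (by norm_num), min_le_right _ _⟩
  have h := main t0 ht0pos ht0lt1
  have h2 : t0 * K ≤ (ε * m / (2 * (K + 1))) * K :=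
    mul_le_mul_of_nonneg_right ht0le hK0
  have h3 : (ε * m / (2 * (K + 1))) * K < ε * m := by
    rw [div_mul_eq_mul_div, div_lt_iff₀ (by linarith : (0:ℝ) < 2 * (K + 1))]
    exact mul_lt_mul_of_pos_left (by linarith) (mul_pos hε hm0)
  have h4 : t0 * (t0 * K) < t0 * (ε * m) :=
    mul_lt_mul_of_pos_left (lt_of_le_of_lt h2 h3) ht0pos
  linarith [h, h4]


end Aux

/-- If `u_A` minimizes `J(·, A)` and `p_A = S*(S(χ_A u_A) − y_d)`, then
`−χ_A(x)·p_A(x) ∈ ∂g(u_A(x))` for a.e. `x ∈ Ω`; equivalently, `u_A(x)` minimizes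
`u ↦ χ_A(x)·p_A(x)·u + g(u)` for a.e. `x ∈ Ω`. -/
theorem optimality_condition_pointwise
    {d : ℕ} {Ω : Set (EuclideanSpace ℝ (Fin d))}
    (hΩm : MeasurableSet Ω) (hΩfin : volume Ω < ⊤)
    {Y : Type*} [NormedAddCommGroup Y] [InnerProductSpace ℝ Y] [CompleteSpace Y]
    (S : Lp ℝ 2 (volume.restrict Ω) →L[ℝ] Y) (yd : Y)
    (g : ℝ → ℝ≥0∞)
    (hg_proper : ∃ u : ℝ, g u ≠ ⊤)
    (hg_lsc : LowerSemicontinuous g)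
    (hg_zero : ∀ u : ℝ, g u = 0 ↔ u = 0)
    (β : EuclideanSpace ℝ (Fin d) → ℝ)
    (hβ : Integrable β (volume.restrict Ω))
    (hg_conv : ∀ u v l : ℝ, l ∈ Set.Ioo (0 : ℝ) 1 →
      g (l * u + (1 - l) * v) ≤ ENNReal.ofReal l * g u + ENNReal.ofReal (1 - l) * g v)
    (A : Set (EuclideanSpace ℝ (Fin d))) (hAm : MeasurableSet A) (hAΩ : A ⊆ Ω)
    (uA pA : Lp ℝ 2 (volume.restrict Ω))
    (huA : IsMinimizer S yd g β A uA)
    (hpA : pA = ContinuousLinearMap.adjoint S (S (chiMul A uA) - yd)) :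
    ∀ᵐ x ∂(volume.restrict Ω),
      (∀ v : ℝ, (g (uA x) : EReal) + (((-(chi A x * pA x)) * (v - uA x) : ℝ) : EReal)
          ≤ (g v : EReal)) ∧
        ∀ v : ℝ, ((chi A x * pA x * uA x : ℝ) : EReal) + (g (uA x) : EReal)
          ≤ ((chi A x * pA x * v : ℝ) : EReal) + (g v : EReal) := by
  classical
  haveI : IsFiniteMeasure (volume.restrict Ω) := ⟨by rwa [Measure.restrict_apply_univ]⟩
  have hgm : Measurable g := hg_lsc.measurable
  have hGfin : ∫⁻ x, g (uA x) ∂(volume.restrict Ω) ≠ ⊤ :=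
    Gfin_of_isMinimizer S yd g β ((hg_zero 0).mpr rfl) A uA huA
  have hum : Measurable (⇑uA) := (Lp.stronglyMeasurable uA).measurable
  have hgum : Measurable fun x => g (uA x) := hgm.comp hum
  have hae_fin : ∀ᵐ x ∂(volume.restrict Ω), g (uA x) ≠ ⊤ := by
    filter_upwards [ae_lt_top hgum hGfin] with x hx
    exact hx.ne
  have hkey : ∀ᵐ x ∂(volume.restrict Ω), ∀ (q : ℚ) (k : ℕ), g (q : ℝ) ≠ ⊤ →
      ¬((g (q : ℝ)).toReal + 1 / ((k : ℝ) + 1)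
          ≤ (g (uA x)).toReal + (-(chi A x * pA x)) * ((q : ℝ) - uA x)
        ∧ g (uA x) ≠ ⊤) := by
    rw [ae_all_iff]
    intro q
    rw [ae_all_iff]
    intro k
    by_cases hq : g (q : ℝ) = ⊤
    · exact ae_of_all _ fun x h' => absurd hq h'
    · have hz := key_measure_zero S yd g β hgm hg_conv A hAm uA pA huA hpA hGfin (q : ℝ)
        (1 / ((k : ℝ) + 1)) hq (by positivity)
      have h := measure_eq_zero_iff_ae_notMem.mp hz
      filter_upwards [h] with x hx
      exact fun _ => hx
  filter_upwards [hae_fin, hkey] with x hfin hk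
  set c : ℝ := chi A x * pA x with hc
  have hrat : ∀ q : ℚ, g (q : ℝ) ≠ ⊤ →
      (g (uA x)).toReal + (-c) * ((q : ℝ) - uA x) ≤ (g (q : ℝ)).toReal := by
    intro q hq
    by_contra hcon
    push_neg at hcon
    obtain ⟨k, hk1⟩ := exists_nat_one_div_lt (sub_pos.mpr hcon)
    exact hk q k hq ⟨by linarith, hfin⟩
  have hcore : ∀ v : ℝ, g v ≠ ⊤ →
      (g (uA x)).toReal + (-c) * (v - uA x) ≤ (g v).toReal := by
    intro v hv
    rcases eq_or_ne v (uA x) with rfl | hne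
    · simp
    have hden : v - uA x ≠ 0 := sub_ne_zero.mpr hne
    obtain ⟨q, ht0, ht1⟩ : ∃ q : ℚ, 0 < ((q : ℝ) - uA x) / (v - uA x)
        ∧ ((q : ℝ) - uA x) / (v - uA x) < 1 := by
      rcases hne.lt_or_gt with hlt | hlt
      · obtain ⟨q, hq1, hq2⟩ := exists_rat_btwn hlt
        exact ⟨q, div_pos_iff.mpr (Or.inr ⟨by linarith, by linarith⟩),
          (div_lt_one_of_neg (by linarith)).mpr (by linarith)⟩
      · obtain ⟨q, hq1, hq2⟩ := exists_rat_btwn hlt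
        exact ⟨q, div_pos (by linarith) (by linarith),
          (div_lt_one (by linarith)).mpr (by linarith)⟩
    set t : ℝ := ((q : ℝ) - uA x) / (v - uA x) with htdef
    have hqu : (q : ℝ) - uA x = t * (v - uA x) := by
      rw [htdef, div_mul_cancel₀ _ hden]
    have hqt : (1 - t) * uA x + t * v = (q : ℝ) := by
      have : (q : ℝ) = uA x + t * (v - uA x) := by linarith [hqu]
      rw [this]; ring
    have hgq_le : g (q : ℝ) ≤ ENNReal.ofReal (1 - t) * g (uA x) + ENNReal.ofReal t * g v := by
      have h := hg_conv (uA x) v (1 - t) ⟨by linarith, by linarith⟩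
      have e3 : (1 : ℝ) - (1 - t) = t := by ring
      rw [e3, hqt] at h
      exact h
    have hfin2 : ENNReal.ofReal (1 - t) * g (uA x) + ENNReal.ofReal t * g v ≠ ⊤ :=
      ENNReal.add_ne_top.mpr ⟨ENNReal.mul_ne_top ENNReal.ofReal_ne_top hfin,
        ENNReal.mul_ne_top ENNReal.ofReal_ne_top hv⟩
    have hgq_ne : g (q : ℝ) ≠ ⊤ := ne_top_of_le_ne_top hfin2 hgq_le
    have hgq_toReal : (g (q : ℝ)).toReal ≤ (1 - t) * (g (uA x)).toReal + t * (g v).toReal := by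
      have h := ENNReal.toReal_mono hfin2 hgq_le
      rwa [ENNReal.toReal_add (ENNReal.mul_ne_top ENNReal.ofReal_ne_top hfin)
        (ENNReal.mul_ne_top ENNReal.ofReal_ne_top hv), ENNReal.toReal_mul, ENNReal.toReal_mul,
        ENNReal.toReal_ofReal (by linarith : (0:ℝ) ≤ 1 - t),
        ENNReal.toReal_ofReal ht0.le] at h
    have hr := hrat q hgq_ne
    rw [hqu] at hr
    have hmul : t * ((g (uA x)).toReal + (-c) * (v - uA x)) ≤ t * (g v).toReal := by
      nlinarith [hr, hgq_toReal]
    exact le_of_mul_le_mul_left hmul ht0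
  constructor
  · intro v
    by_cases hv : g v = ⊤
    · rw [hv, EReal.coe_ennreal_top]
      exact le_top
    · rw [ennreal_coe_ereal_eq hfin, ennreal_coe_ereal_eq hv, ← EReal.coe_add,
        EReal.coe_le_coe_iff]
      exact hcore v hv
  · intro v
    by_cases hv : g v = ⊤
    · rw [hv, EReal.coe_ennreal_top, EReal.coe_add_top]
      exact le_top
    · rw [ennreal_coe_ereal_eq hfin, ennreal_coe_ereal_eq hv, ← EReal.coe_add, ← EReal.coe_add,
        EReal.coe_le_coe_iff]
      have h := hcore v hv
      nlinarith [h]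
end
end

section
/- There is a constant M > 0 such that ‖y_A − y_d‖_Y + ‖u_A‖_{L²(Ω)} ≤ M for all measurable sets A ⊆ Ω and all solutions (u_A, y_A, p_A) of (P_A). -/
open MeasureTheory ENNReal Set Filter Metric Topology
open scoped Classical symmDiff NNReal

noncomputable section

open L0Control


open scoped RealInnerProductSpace

private lemma g_quad_lb {g : ℝ → ℝ≥0∞} {μ₀ : ℝ} (hμ₀ : 0 < μ₀)
    (hg0 : g 0 = 0)
    (hg_sconv : ∀ u v l : ℝ, l ∈ Set.Ioo (0 : ℝ) 1 →
      ENNReal.ofReal (μ₀ / 2 * l * (1 - l) * (u - v) ^ 2) + g (l * u + (1 - l) * v)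
        ≤ ENNReal.ofReal l * g u + ENNReal.ofReal (1 - l) * g v) (t : ℝ) :
    ENNReal.ofReal (μ₀ / 4 * t ^ 2) ≤ g t := by
  have h := hg_sconv t 0 (1/2) ⟨by norm_num, by norm_num⟩
  simp only [hg0, mul_zero, add_zero] at h
  have h1 : ENNReal.ofReal (μ₀ / 2 * (1/2) * (1 - 1/2) * (t - 0) ^ 2)
      ≤ ENNReal.ofReal (1/2) * g t := le_trans le_self_add h
  calc ENNReal.ofReal (μ₀ / 4 * t ^ 2)
      = ENNReal.ofReal 2 * ENNReal.ofReal (μ₀ / 2 * (1/2) * (1 - 1/2) * (t - 0) ^ 2) := by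
        rw [← ENNReal.ofReal_mul (by norm_num : (0:ℝ) ≤ 2)]
        congr 1; ring
    _ ≤ ENNReal.ofReal 2 * (ENNReal.ofReal (1/2) * g t) := mul_le_mul_right h1 _
    _ = g t := by
        rw [← mul_assoc, ← ENNReal.ofReal_mul (by norm_num : (0:ℝ) ≤ 2),
          show (2:ℝ) * (1/2) = 1 by norm_num, ENNReal.ofReal_one, one_mul]

/-- Uniform bound: there is `M > 0` with
`‖y_A − y_d‖_Y + ‖u_A‖_{L²} ≤ M` for all measurable `A ⊆ Ω` and all solutions of `(P_A)`. -/
theorem uniform_bound_state_control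
    {d : ℕ} {Ω : Set (EuclideanSpace ℝ (Fin d))}
    (hΩm : MeasurableSet Ω) (hΩfin : volume Ω < ⊤)
    {Y : Type*} [NormedAddCommGroup Y] [InnerProductSpace ℝ Y] [CompleteSpace Y]
    (S : Lp ℝ 2 (volume.restrict Ω) →L[ℝ] Y) (yd : Y)
    (g : ℝ → ℝ≥0∞)
    (hg_proper : ∃ u : ℝ, g u ≠ ⊤)
    (hg_lsc : LowerSemicontinuous g)
    (hg_zero : ∀ u : ℝ, g u = 0 ↔ u = 0)
    (β : EuclideanSpace ℝ (Fin d) → ℝ)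
    (hβ : Integrable β (volume.restrict Ω))
    (μ₀ : ℝ) (hμ₀ : 0 < μ₀)
    (hg_sconv : ∀ u v l : ℝ, l ∈ Set.Ioo (0 : ℝ) 1 →
      ENNReal.ofReal (μ₀ / 2 * l * (1 - l) * (u - v) ^ 2) + g (l * u + (1 - l) * v)
        ≤ ENNReal.ofReal l * g u + ENNReal.ofReal (1 - l) * g v)
    :
    ∃ M : ℝ, 0 < M ∧
      ∀ A : Set (EuclideanSpace ℝ (Fin d)), MeasurableSet A → A ⊆ Ω →
        ∀ (uA : Lp ℝ 2 (volume.restrict Ω)) (yA : Y) (pA : Lp ℝ 2 (volume.restrict Ω)),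
          IsSolution S yd g β A uA yA pA → ‖yA - yd‖ + ‖uA‖ ≤ M := by
  have hg0 : g 0 = 0 := (hg_zero 0).mpr rfl
  refine ⟨‖yd‖ + Real.sqrt (2 / μ₀ * ‖yd‖ ^ 2) + 1,
    by positivity, ?_⟩
  intro A hA hAΩ uA yA pA hsol
  obtain ⟨hmin, hy, -⟩ := hsol
  have hchi0 : chiMul A (0 : Lp ℝ 2 (volume.restrict Ω)) = 0 := by
    simp only [chiMul, dif_pos hA]
    have h0 : A.indicator ((0 : Lp ℝ 2 (volume.restrict Ω)) : EuclideanSpace ℝ (Fin d) → ℝ)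
        =ᵐ[volume.restrict Ω] (0 : EuclideanSpace ℝ (Fin d) → ℝ) := by
      filter_upwards [Lp.coeFn_zero ℝ 2 (volume.restrict Ω)] with x hx
      by_cases hxa : x ∈ A
      · rw [Set.indicator_of_mem hxa]; exact hx
      · rw [Set.indicator_of_notMem hxa]; rfl
    rw [MemLp.toLp_congr _ (MemLp.zero (ε := ℝ) (p := 2) (μ := volume.restrict Ω)) h0, MemLp.toLp_zero]
  have hI0 : (∫⁻ x, g ((0 : Lp ℝ 2 (volume.restrict Ω)) x) ∂(volume.restrict Ω)) = 0 := by
    have h0 : (fun x => g ((0 : Lp ℝ 2 (volume.restrict Ω)) x))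
        =ᵐ[volume.restrict Ω] (fun _ : EuclideanSpace ℝ (Fin d) => (0 : ℝ≥0∞)) := by
      filter_upwards [Lp.coeFn_zero ℝ 2 (volume.restrict Ω)] with x hx
      have hx0 : ((0 : Lp ℝ 2 (volume.restrict Ω)) x : ℝ) = 0 := hx
      rw [hx0, hg0]
    rw [lintegral_congr_ae h0, lintegral_zero]
  have hmin0 := hmin 0
  simp only [Jfun, hchi0, map_zero, zero_sub, norm_neg, hI0, ← hy,
    ENNReal.coe_zero, EReal.coe_ennreal_zero, add_zero] at hmin0
  set I := ∫⁻ x, g (uA x) ∂(volume.restrict Ω) with hIdef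
  have hItop : I ≠ ⊤ := by
    intro h
    rw [h, EReal.coe_ennreal_top, EReal.coe_add_top] at hmin0
    exact (EReal.coe_lt_top _).not_ge hmin0
  have hIc : ((I : EReal)) = ((I.toReal : ℝ) : EReal) := by
    rw [← EReal.toReal_coe_ennreal]
    exact (EReal.coe_toReal (fun h => hItop (EReal.coe_ennreal_eq_top_iff.mp h))
      (EReal.coe_ennreal_ne_bot _)).symm
  rw [hIc, ← EReal.coe_add, EReal.coe_le_coe_iff] at hmin0
  have key : 2⁻¹ * ‖yA - yd‖ ^ 2 + I.toReal ≤ 2⁻¹ * ‖yd‖ ^ 2 := by linarith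
  have hb1 : ‖yA - yd‖ ≤ ‖yd‖ := by
    have h2 : ‖yA - yd‖ ^ 2 ≤ ‖yd‖ ^ 2 := by
      have := ENNReal.toReal_nonneg (a := I); linarith
    calc ‖yA - yd‖ = Real.sqrt (‖yA - yd‖ ^ 2) := (Real.sqrt_sq (norm_nonneg _)).symm
      _ ≤ Real.sqrt (‖yd‖ ^ 2) := Real.sqrt_le_sqrt h2
      _ = ‖yd‖ := Real.sqrt_sq (norm_nonneg _)
  have hinner : (∫ x, uA x * uA x ∂(volume.restrict Ω)) = ‖uA‖ ^ 2 := by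
    rw [← real_inner_self_eq_norm_sq, L2.inner_def]
    simp [RCLike.inner_apply, RCLike.conj_to_real, pow_two]
  have hint : Integrable (fun x => uA x * uA x) (volume.restrict Ω) :=
    L2.integrable_inner (𝕜 := ℝ) uA uA
  have hlb : ENNReal.ofReal (μ₀ / 4 * ‖uA‖ ^ 2) ≤ I := by
    calc ENNReal.ofReal (μ₀ / 4 * ‖uA‖ ^ 2)
        = ENNReal.ofReal (∫ x, μ₀ / 4 * (uA x * uA x) ∂(volume.restrict Ω)) := by
          rw [MeasureTheory.integral_const_mul, hinner]
      _ = ∫⁻ x, ENNReal.ofReal (μ₀ / 4 * (uA x * uA x)) ∂(volume.restrict Ω) :=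
          ofReal_integral_eq_lintegral_ofReal (hint.const_mul _)
            (Filter.Eventually.of_forall fun x =>
            mul_nonneg (div_nonneg hμ₀.le (by norm_num)) (mul_self_nonneg _))
      _ ≤ I := lintegral_mono fun x => by
          simpa [pow_two] using g_quad_lb hμ₀ hg0 hg_sconv (uA x)
  have hub : μ₀ / 4 * ‖uA‖ ^ 2 ≤ I.toReal := (ENNReal.ofReal_le_iff_le_toReal hItop).mp hlb
  have hb2 : ‖uA‖ ≤ Real.sqrt (2 / μ₀ * ‖yd‖ ^ 2) := by
    have h2 : ‖uA‖ ^ 2 ≤ 2 / μ₀ * ‖yd‖ ^ 2 := by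
      rw [div_mul_eq_mul_div, le_div_iff₀ hμ₀]
      nlinarith [sq_nonneg ‖yA - yd‖]
    calc ‖uA‖ = Real.sqrt (‖uA‖ ^ 2) := (Real.sqrt_sq (norm_nonneg _)).symm
      _ ≤ _ := Real.sqrt_le_sqrt h2
  linarith
end
end

section
/- There is a constant P > 0 such that ‖u_A‖_{L^q(Ω)} ≤ P and ‖p_A‖_{L^q(Ω)} ≤ P for all measurable sets A ⊆ Ω and all solutions (u_A, y_A, p_A) of (P_A), where q > 6 is the exponent from the smoothing assumption. -/
open MeasureTheory ENNReal Set Filter Metric Topology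
open scoped Classical symmDiff NNReal

noncomputable section

open L0Control

section Aux
open MeasureTheory ENNReal Set

variable {α : Type*} [MeasurableSpace α] {μ : Measure α}

lemma chiMul_coe {A : Set α} (hA : MeasurableSet A) (u : Lp ℝ 2 μ) :
    ⇑(L0Control.chiMul A u) =ᵐ[μ] A.indicator ⇑u := by
  rw [L0Control.chiMul, dif_pos hA]
  exact MemLp.coeFn_toLp _

lemma ereal_eq {a : ℝ} {G : ℝ≥0∞} (hG : G ≠ ⊤) :
    ((a:ℝ):EReal) + (G:EReal) = ((a + G.toReal : ℝ):EReal) := by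
  have h1 : ((G.toReal : ℝ) : EReal) = (G : EReal) := by
    rw [← EReal.toReal_coe_ennreal (x := G)]
    exact EReal.coe_toReal (by simp [hG]) (by simp)
  rw [EReal.coe_add, h1]

lemma ereal_le {a b : ℝ} {G : ℝ≥0∞} (h : ((a:ℝ):EReal) + (G : EReal) ≤ ((b:ℝ):EReal)) :
    G ≠ ⊤ ∧ a + G.toReal ≤ b := by
  rcases eq_or_ne G ⊤ with rfl | hG
  · rw [EReal.coe_ennreal_top, EReal.coe_add_top] at h
    exact absurd h (by simp)
  · rw [ereal_eq hG] at h
    exact ⟨hG, EReal.coe_le_coe_iff.mp h⟩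

lemma g_lb (g : ℝ → ℝ≥0∞) (hg0 : g 0 = 0) (μ₀ : ℝ) (hμ₀ : 0 < μ₀)
    (hg_sconv : ∀ u v l : ℝ, l ∈ Set.Ioo (0 : ℝ) 1 →
      ENNReal.ofReal (μ₀ / 2 * l * (1 - l) * (u - v) ^ 2) + g (l * u + (1 - l) * v)
        ≤ ENNReal.ofReal l * g u + ENNReal.ofReal (1 - l) * g v) :
    ∀ u : ℝ, ENNReal.ofReal (μ₀ / 2 * u ^ 2) ≤ g u := by
  intro u
  rcases eq_or_ne (g u) ⊤ with h | h
  · simp [h]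
  · have key : ∀ l ∈ Set.Ioo (0:ℝ) 1, μ₀/2 * (1-l) * u^2 ≤ (g u).toReal := by
      intro l hl
      have h1 := hg_sconv u 0 l hl
      rw [hg0] at h1
      simp only [mul_zero, add_zero, sub_zero] at h1
      have h2 : ENNReal.ofReal (μ₀/2 * l * (1-l) * u^2) ≤ ENNReal.ofReal l * g u :=
        le_trans le_self_add h1
      rw [← ENNReal.ofReal_toReal h, ← ENNReal.ofReal_mul hl.1.le] at h2
      have h3 := (ENNReal.ofReal_le_ofReal_iff
        (mul_nonneg hl.1.le ENNReal.toReal_nonneg)).mp h2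
      have hl1 := hl.1
      nlinarith [ENNReal.toReal_nonneg (a := g u)]
    have hfin : μ₀/2 * u^2 ≤ (g u).toReal := by
      refine le_of_forall_pos_le_add ?_
      intro ε hε
      rcases eq_or_lt_of_le (by positivity : (0:ℝ) ≤ μ₀/2 * u^2) with hK | hK
      · have := key (1/2) (by norm_num)
        nlinarith
      · set K := μ₀/2 * u^2 with hKdef
        set l : ℝ := min (1/2) (ε / K) with hl
        have hlpos : 0 < l := lt_min (by norm_num) (by positivity)
        have hllt : l < 1 := lt_of_le_of_lt (min_le_left _ _) (by norm_num)
        have h4 := key l ⟨hlpos, hllt⟩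
        have h5 : l * K ≤ ε := by
          have h6 : l ≤ ε / K := min_le_right _ _
          rw [le_div_iff₀ hK] at h6
          linarith
        nlinarith
    calc ENNReal.ofReal (μ₀/2 * u^2) ≤ ENNReal.ofReal (g u).toReal :=
          ENNReal.ofReal_le_ofReal hfin
      _ = g u := ENNReal.ofReal_toReal h

end Aux

set_option maxHeartbeats 8000000 in
/-- Uniform `L^q` bounds: there is `P > 0` with
`‖u_A‖_{L^q} ≤ P` and `‖p_A‖_{L^q} ≤ P` for all measurable `A ⊆ Ω`
and all solutions of `(P_A)`, where `q > 6` is the exponent from the smoothing assumption. -/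
theorem uniform_Lq_bounds
    {d : ℕ} {Ω : Set (EuclideanSpace ℝ (Fin d))}
    (hΩm : MeasurableSet Ω) (hΩfin : volume Ω < ⊤)
    {Y : Type*} [NormedAddCommGroup Y] [InnerProductSpace ℝ Y] [CompleteSpace Y]
    (S : Lp ℝ 2 (volume.restrict Ω) →L[ℝ] Y) (yd : Y)
    (g : ℝ → ℝ≥0∞)
    (hg_proper : ∃ u : ℝ, g u ≠ ⊤)
    (hg_lsc : LowerSemicontinuous g)
    (hg_zero : ∀ u : ℝ, g u = 0 ↔ u = 0)
    (β : EuclideanSpace ℝ (Fin d) → ℝ)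
    (hβ : Integrable β (volume.restrict Ω))
    (μ₀ : ℝ) (hμ₀ : 0 < μ₀)
    (hg_sconv : ∀ u v l : ℝ, l ∈ Set.Ioo (0 : ℝ) 1 →
      ENNReal.ofReal (μ₀ / 2 * l * (1 - l) * (u - v) ^ 2) + g (l * u + (1 - l) * v)
        ≤ ENNReal.ofReal l * g u + ENNReal.ofReal (1 - l) * g v)
    (q : ℝ≥0∞) (hq : 6 < q) (CS : ℝ)
    (hSS : ∀ w : Lp ℝ 2 (volume.restrict Ω),
      eLpNorm (⇑(ContinuousLinearMap.adjoint S (S w))) q (volume.restrict Ω) ≤ ENNReal.ofReal (CS * ‖w‖))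
    (hSyd : MemLp (⇑(ContinuousLinearMap.adjoint S yd)) q (volume.restrict Ω))
    :
    ∃ P : ℝ, 0 < P ∧
      ∀ A : Set (EuclideanSpace ℝ (Fin d)), MeasurableSet A → A ⊆ Ω →
        ∀ (uA : Lp ℝ 2 (volume.restrict Ω)) (yA : Y) (pA : Lp ℝ 2 (volume.restrict Ω)),
          IsSolution S yd g β A uA yA pA →
            eLpNorm (⇑uA) q (volume.restrict Ω) ≤ ENNReal.ofReal P ∧
              eLpNorm (⇑pA) q (volume.restrict Ω) ≤ ENNReal.ofReal P := by
  classical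
  have hg0 : g 0 = 0 := (hg_zero 0).mpr rfl
  have hgm : Measurable g := hg_lsc.measurable
  have hglb : ∀ u : ℝ, ENNReal.ofReal (μ₀ / 2 * u ^ 2) ≤ g u :=
    g_lb g hg0 μ₀ hμ₀ hg_sconv
  have hq1 : (1 : ℝ≥0∞) ≤ q := le_trans (by norm_num) hq.le
  set T : ℝ := (eLpNorm (⇑(ContinuousLinearMap.adjoint S yd)) q (volume.restrict Ω)).toReal with hT
  have hT0 : 0 ≤ T := ENNReal.toReal_nonneg
  set B : ℝ := ‖yd‖ / Real.sqrt μ₀ with hB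
  have hB0 : 0 ≤ B := div_nonneg (norm_nonneg _) (Real.sqrt_nonneg _)
  set C0 : ℝ := |CS| * B + T with hC0
  have hC00 : 0 ≤ C0 := by positivity
  have hμ₀' : (0:ℝ) < 2 / μ₀ := by positivity
  refine ⟨(1 + 2 / μ₀) * C0 + 1, by positivity, ?_⟩
  intro A hA hAΩ u y p hsol
  obtain ⟨hmin, hy, hp⟩ := hsol
  -- step 1 : compare with 0
  have step1 : (∫⁻ x, g (u x) ∂(volume.restrict Ω)) ≠ ⊤ ∧
      (∫⁻ x, g (u x) ∂(volume.restrict Ω)).toReal ≤ 2⁻¹ * ‖yd‖ ^ 2 ∧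
      2⁻¹ * ‖S (L0Control.chiMul A u) - yd‖ ^ 2 ≤ 2⁻¹ * ‖yd‖ ^ 2 := by
    have h0 := hmin (0 : Lp ℝ 2 (volume.restrict Ω))
    have hc0 : L0Control.chiMul A (0 : Lp ℝ 2 (volume.restrict Ω)) = 0 := by
      apply Lp.ext
      refine (chiMul_coe hA 0).trans ?_
      filter_upwards [Lp.coeFn_zero ℝ 2 (volume.restrict Ω)] with x hx
      simp only [Set.indicator_apply]
      split_ifs
      · rfl
      · rw [hx]; simp
    have hz : ∫⁻ x, g ((0 : Lp ℝ 2 (volume.restrict Ω)) x) ∂(volume.restrict Ω) = 0 := by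
      have hze : (fun x => g ((0 : Lp ℝ 2 (volume.restrict Ω)) x)) =ᵐ[volume.restrict Ω]
          fun _ => (0:ℝ≥0∞) := by
        filter_upwards [Lp.coeFn_zero ℝ 2 (volume.restrict Ω)] with x hx
        rw [hx]
        simp [hg0]
      rw [lintegral_congr_ae hze, lintegral_zero]
    simp only [L0Control.Jfun, hc0, hz, map_zero, zero_sub, norm_neg,
      EReal.coe_ennreal_zero, add_zero] at h0
    obtain ⟨hne, hle⟩ := ereal_le h0
    have hsq : (0:ℝ) ≤ 2⁻¹ * ‖S (L0Control.chiMul A u) - yd‖ ^ 2 := by positivity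
    have htr : (0:ℝ) ≤ (∫⁻ x, g (u x) ∂(volume.restrict Ω)).toReal := ENNReal.toReal_nonneg
    exact ⟨hne, by linarith, by linarith⟩
  obtain ⟨hGne, hGle, hyle⟩ := step1
  -- step 2 : L² bound on u
  have hu2 : ‖u‖ ≤ B := by
    have hG2 : ∫⁻ x, ENNReal.ofReal (μ₀/2 * (u x)^2) ∂(volume.restrict Ω)
        ≤ ENNReal.ofReal (2⁻¹ * ‖yd‖^2) := by
      refine le_trans (lintegral_mono fun x => hglb (u x)) ?_
      rw [← ENNReal.ofReal_toReal hGne]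
      exact ENNReal.ofReal_le_ofReal hGle
    have hG2' : ENNReal.ofReal (μ₀/2) * ∫⁻ x, ENNReal.ofReal ((u x)^2) ∂(volume.restrict Ω)
        ≤ ENNReal.ofReal (μ₀/2) * ENNReal.ofReal (‖yd‖^2/μ₀) := by
      rw [← lintegral_const_mul' _ _ ENNReal.ofReal_ne_top]
      calc ∫⁻ x, ENNReal.ofReal (μ₀/2) * ENNReal.ofReal ((u x)^2) ∂(volume.restrict Ω)
          = ∫⁻ x, ENNReal.ofReal (μ₀/2 * (u x)^2) ∂(volume.restrict Ω) := by
            congr 1; funext x; rw [← ENNReal.ofReal_mul (by positivity)]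
        _ ≤ ENNReal.ofReal (2⁻¹*‖yd‖^2) := hG2
        _ = ENNReal.ofReal (μ₀/2) * ENNReal.ofReal (‖yd‖^2/μ₀) := by
            rw [← ENNReal.ofReal_mul (by positivity)]
            congr 1
            field_simp
    have hG3 : ∫⁻ x, ENNReal.ofReal ((u x)^2) ∂(volume.restrict Ω) ≤ ENNReal.ofReal (‖yd‖^2/μ₀) :=
      (ENNReal.mul_le_mul_iff_right (ENNReal.ofReal_pos.mpr (by positivity)).ne'
        ENNReal.ofReal_ne_top).mp hG2'
    have hnorm : ‖u‖^2 = ∫ x, (u x) * (u x) ∂(volume.restrict Ω) := by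
      rw [← real_inner_self_eq_norm_sq, L2.inner_def]
      simp [RCLike.inner_apply, conj_trivial]
      simp only [sq]
    have hnorm2 : ‖u‖^2 = (∫⁻ x, ENNReal.ofReal ((u x)^2) ∂(volume.restrict Ω)).toReal := by
      rw [hnorm, integral_eq_lintegral_of_nonneg_ae (ae_of_all _ fun x => mul_self_nonneg (u x))
        ((Lp.aestronglyMeasurable u).mul (Lp.aestronglyMeasurable u))]
      congr 1
      apply lintegral_congr
      intro x
      rw [sq]
    have hle2 : ‖u‖^2 ≤ ‖yd‖^2/μ₀ := by
      rw [hnorm2]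
      calc (∫⁻ x, ENNReal.ofReal ((u x)^2) ∂(volume.restrict Ω)).toReal
          ≤ (ENNReal.ofReal (‖yd‖^2/μ₀)).toReal := ENNReal.toReal_mono ENNReal.ofReal_ne_top hG3
        _ = ‖yd‖^2/μ₀ := ENNReal.toReal_ofReal (by positivity)
    have hBsq : B^2 = ‖yd‖^2/μ₀ := by
      rw [hB, div_pow, Real.sq_sqrt hμ₀.le]
    nlinarith [norm_nonneg u, hB0]
  -- step 3 : bound on p in L^q
  have hcu : ‖L0Control.chiMul A u‖ ≤ B := by
    calc ‖L0Control.chiMul A u‖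
        = (eLpNorm (⇑(L0Control.chiMul A u)) 2 (volume.restrict Ω)).toReal := Lp.norm_def _
      _ = (eLpNorm (A.indicator ⇑u) 2 (volume.restrict Ω)).toReal := by
          rw [eLpNorm_congr_ae (chiMul_coe hA u)]
      _ ≤ (eLpNorm (⇑u) 2 (volume.restrict Ω)).toReal :=
          ENNReal.toReal_mono (Lp.eLpNorm_ne_top u) (eLpNorm_indicator_le _)
      _ = ‖u‖ := (Lp.norm_def u).symm
      _ ≤ B := hu2
  have hpq : eLpNorm (⇑p) q (volume.restrict Ω) ≤ ENNReal.ofReal C0 := by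
    have hpeq : ⇑p =ᵐ[volume.restrict Ω]
        ⇑(ContinuousLinearMap.adjoint S (S (L0Control.chiMul A u)))
        - ⇑(ContinuousLinearMap.adjoint S yd) := by
      rw [hp, hy, map_sub]
      exact Lp.coeFn_sub _ _
    rw [eLpNorm_congr_ae hpeq]
    refine le_trans (eLpNorm_sub_le (Lp.aestronglyMeasurable _) (Lp.aestronglyMeasurable _) hq1) ?_
    have h2 : ENNReal.ofReal (CS * ‖L0Control.chiMul A u‖) ≤ ENNReal.ofReal (|CS| * B) := by
      refine ENNReal.ofReal_le_ofReal ?_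
      have h2a : CS * ‖L0Control.chiMul A u‖ ≤ |CS| * ‖L0Control.chiMul A u‖ :=
        mul_le_mul_of_nonneg_right (le_abs_self CS) (norm_nonneg _)
      nlinarith [abs_nonneg CS, norm_nonneg (L0Control.chiMul A u)]
    have h3 : eLpNorm (⇑(ContinuousLinearMap.adjoint S yd)) q (volume.restrict Ω)
        = ENNReal.ofReal T := by
      rw [hT, ENNReal.ofReal_toReal hSyd.2.ne]
    calc _ ≤ ENNReal.ofReal (|CS| * B) + ENNReal.ofReal T :=
          add_le_add (le_trans (hSS (L0Control.chiMul A u)) h2) (le_of_eq h3)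
      _ = ENNReal.ofReal C0 := by rw [← ENNReal.ofReal_add (by positivity) hT0, hC0]
  -- step 4 : pointwise bound |u| ≤ (2/μ₀)|p| a.e.
  have hptw : ∀ᵐ x ∂(volume.restrict Ω),
      ‖u x‖ ≤ ‖((2 / μ₀) • (⇑p : EuclideanSpace ℝ (Fin d) → ℝ)) x‖ := by
    have hu : AEMeasurable (⇑u) (volume.restrict Ω) := (Lp.aestronglyMeasurable u).aemeasurable
    have hpm : AEMeasurable (⇑p) (volume.restrict Ω) := (Lp.aestronglyMeasurable p).aemeasurable
    obtain ⟨u', hu'm, huu'⟩ : ∃ u' : EuclideanSpace ℝ (Fin d) → ℝ,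
        Measurable u' ∧ ⇑u =ᵐ[volume.restrict Ω] u' := ⟨hu.mk, hu.measurable_mk, hu.ae_eq_mk⟩
    obtain ⟨p', hp'm, hpp'⟩ : ∃ p' : EuclideanSpace ℝ (Fin d) → ℝ,
        Measurable p' ∧ ⇑p =ᵐ[volume.restrict Ω] p' := ⟨hpm.mk, hpm.measurable_mk, hpm.ae_eq_mk⟩
    obtain ⟨h, hhm, hhdef⟩ : ∃ h : EuclideanSpace ℝ (Fin d) → ℝ, Measurable h ∧
        h = fun x => (g (u' x)).toReal + (A.indicator (fun _ => (1:ℝ)) x) * (p' x * u' x) :=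
      ⟨_, (ENNReal.measurable_toReal.comp (hgm.comp hu'm)).add
        ((measurable_const.indicator hA).mul (hp'm.mul hu'm)), rfl⟩
    obtain ⟨E, hE, hEdef⟩ : ∃ E : Set (EuclideanSpace ℝ (Fin d)), MeasurableSet E ∧
        E = {x | 0 < h x} := ⟨_, measurableSet_lt measurable_const hhm, rfl⟩
    set w := L0Control.chiMul Eᶜ u with hwdef
    have hw : ⇑w =ᵐ[volume.restrict Ω] Eᶜ.indicator ⇑u := chiMul_coe hE.compl u
    have hwm : AEMeasurable (⇑w) (volume.restrict Ω) := (Lp.aestronglyMeasurable w).aemeasurable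
    have hgw : ∀ᵐ x ∂(volume.restrict Ω), g (w x) ≤ g (u x) := by
      filter_upwards [hw] with x hx
      rw [hx, Set.indicator_apply]
      split_ifs
      · exact le_rfl
      · simp [hg0]
    have hGwle : (∫⁻ x, g (w x) ∂(volume.restrict Ω)) ≤ ∫⁻ x, g (u x) ∂(volume.restrict Ω) :=
      lintegral_mono_ae hgw
    have hGwne : (∫⁻ x, g (w x) ∂(volume.restrict Ω)) ≠ ⊤ :=
      (lt_of_le_of_lt hGwle (lt_top_iff_ne_top.mpr hGne)).ne
    obtain ⟨gu, hgu⟩ : ∃ gu : ℝ, gu = (∫⁻ x, g (u x) ∂(volume.restrict Ω)).toReal := ⟨_, rfl⟩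
    obtain ⟨gw, hgwdef⟩ : ∃ gw : ℝ, gw = (∫⁻ x, g (w x) ∂(volume.restrict Ω)).toReal := ⟨_, rfl⟩
    obtain ⟨cu, hcudef⟩ : ∃ cu : Lp ℝ 2 (volume.restrict Ω), cu = L0Control.chiMul A u := ⟨_, rfl⟩
    obtain ⟨cw, hcwdef⟩ : ∃ cw : Lp ℝ 2 (volume.restrict Ω), cw = L0Control.chiMul A w := ⟨_, rfl⟩
    obtain ⟨δ, hδdef⟩ : ∃ δ : Y, δ = S cw - S cu := ⟨_, rfl⟩
    have hcu_coe : ⇑cu =ᵐ[volume.restrict Ω] A.indicator ⇑u := by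
      rw [hcudef]; exact chiMul_coe hA u
    have hcw_coe : ⇑cw =ᵐ[volume.restrict Ω] A.indicator ⇑w := by
      rw [hcwdef]; exact chiMul_coe hA w
    -- key inequality for each t
    have key : ∀ t : ℝ, t ∈ Set.Ioo (0:ℝ) 1 →
        gu - gw ≤ (inner ℝ (S cu - yd) δ : ℝ) + t/2 * ‖δ‖^2 := by
      intro t ht
      obtain ⟨ut, hutdef⟩ : ∃ ut : Lp ℝ 2 (volume.restrict Ω),
          ut = ((1-t) : ℝ) • u + (t:ℝ) • w := ⟨_, rfl⟩
      have hut : ⇑ut =ᵐ[volume.restrict Ω] fun x => (1-t) * u x + t * w x := by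
        rw [hutdef]
        filter_upwards [Lp.coeFn_add (((1-t):ℝ)•u) ((t:ℝ)•w), Lp.coeFn_smul ((1-t):ℝ) u,
          Lp.coeFn_smul (t:ℝ) w] with x h1 h2 h3
        rw [h1, Pi.add_apply, h2, h3, Pi.smul_apply, Pi.smul_apply,
          smul_eq_mul, smul_eq_mul]
      have hcut : L0Control.chiMul A ut = ((1-t) : ℝ) • cu + (t:ℝ) • cw := by
        apply Lp.ext
        filter_upwards [chiMul_coe hA ut, hut, Lp.coeFn_add (((1-t):ℝ)•cu) ((t:ℝ)•cw),
          Lp.coeFn_smul ((1-t):ℝ) cu, Lp.coeFn_smul (t:ℝ) cw, hcu_coe,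
          hcw_coe] with x e1 e2 e3 e4 e5 e6 e7
        rw [e1, e3, Pi.add_apply, e4, e5, Pi.smul_apply, Pi.smul_apply, smul_eq_mul, smul_eq_mul,
          e6, e7]
        simp only [Set.indicator_apply]
        split_ifs with hxA
        · rw [e2]
        · ring
      have hScut : S (L0Control.chiMul A ut) = (S cu - yd) + t • δ + yd := by
        rw [hcut, map_add, _root_.map_smul, _root_.map_smul, hδdef, sub_smul, one_smul, smul_sub]
        abel
      have hconv : ∀ᵐ x ∂(volume.restrict Ω),
          g (ut x) ≤ ENNReal.ofReal (1-t) * g (u x) + ENNReal.ofReal t * g (w x) := by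
        filter_upwards [hut] with x hx
        rw [hx]
        have hs := hg_sconv (u x) (w x) (1-t) ⟨by linarith [ht.2], by linarith [ht.1]⟩
        rw [_root_.sub_sub_cancel] at hs
        exact le_trans le_add_self hs
      have hGt_le : (∫⁻ x, g (ut x) ∂(volume.restrict Ω))
          ≤ ENNReal.ofReal (1-t) * (∫⁻ x, g (u x) ∂(volume.restrict Ω))
            + ENNReal.ofReal t * (∫⁻ x, g (w x) ∂(volume.restrict Ω)) := by
        refine le_trans (lintegral_mono_ae hconv) ?_
        rw [lintegral_add_left' (f := fun x => ENNReal.ofReal (1-t) * g (u x))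
            (((hgm.comp_aemeasurable hu)).const_mul _),
          lintegral_const_mul' _ _ ENNReal.ofReal_ne_top,
          lintegral_const_mul' _ _ ENNReal.ofReal_ne_top]
      have hRne : ENNReal.ofReal (1-t) * (∫⁻ x, g (u x) ∂(volume.restrict Ω))
          + ENNReal.ofReal t * (∫⁻ x, g (w x) ∂(volume.restrict Ω)) ≠ ⊤ :=
        ENNReal.add_ne_top.mpr ⟨ENNReal.mul_ne_top ENNReal.ofReal_ne_top hGne,
          ENNReal.mul_ne_top ENNReal.ofReal_ne_top hGwne⟩
      have hGtne : (∫⁻ x, g (ut x) ∂(volume.restrict Ω)) ≠ ⊤ := ne_top_of_le_ne_top hRne hGt_le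
      have hGt_r : (∫⁻ x, g (ut x) ∂(volume.restrict Ω)).toReal ≤ (1-t) * gu + t * gw := by
        have h6 := ENNReal.toReal_mono hRne hGt_le
        rw [ENNReal.toReal_add (ENNReal.mul_ne_top ENNReal.ofReal_ne_top hGne)
          (ENNReal.mul_ne_top ENNReal.ofReal_ne_top hGwne), ENNReal.toReal_mul,
          ENNReal.toReal_mul, ENNReal.toReal_ofReal (by linarith [ht.2]),
          ENNReal.toReal_ofReal ht.1.le] at h6
        rw [hgu, hgwdef]
        exact h6
      have hcomp := hmin ut
      simp only [L0Control.Jfun] at hcomp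
      rw [ereal_eq hGtne] at hcomp
      obtain ⟨-, hcr⟩ := ereal_le hcomp
      rw [hScut, add_sub_cancel_right, ← hcudef] at hcr
      rw [← hgu] at hcr
      have hexp : ‖(S cu - yd) + t • δ‖^2
          = ‖S cu - yd‖^2 + 2*(t * (inner ℝ (S cu - yd) δ : ℝ)) + t^2*‖δ‖^2 := by
        rw [norm_add_sq_real, real_inner_smul_right, norm_smul, Real.norm_eq_abs, mul_pow, sq_abs]
      rw [hexp] at hcr
      have hlin : t * (gu - gw) ≤ t * ((inner ℝ (S cu - yd) δ : ℝ) + t/2 * ‖δ‖^2) := by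
        linarith [hcr, hGt_r]
      exact le_of_mul_le_mul_left hlin ht.1
    -- pass to the limit t → 0
    have hVI : gu - gw ≤ (inner ℝ (S cu - yd) δ : ℝ) := by
      refine le_of_forall_pos_le_add ?_
      intro ε hε
      obtain ⟨t, htdef⟩ : ∃ t : ℝ, t = min (1/2) (ε / (‖δ‖^2/2 + 1)) := ⟨_, rfl⟩
      have htpos : 0 < t := htdef ▸ lt_min (by norm_num) (by positivity)
      have htlt : t < 1 := htdef ▸ lt_of_le_of_lt (min_le_left _ _) (by norm_num)
      have h1 := key t ⟨htpos, htlt⟩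
      have h3 : t ≤ ε / (‖δ‖^2/2 + 1) := htdef ▸ min_le_right _ _
      have h4 : (0:ℝ) < ‖δ‖^2/2 + 1 := by positivity
      rw [le_div_iff₀ h4] at h3
      linarith [h1, h3, htpos]
    -- rewrite the inner product as an integral
    have hinner : (inner ℝ (S cu - yd) δ : ℝ) = ∫ x, p x * (cw x - cu x) ∂(volume.restrict Ω) := by
      have e0 : p = ContinuousLinearMap.adjoint S (S cu - yd) := by
        rw [hp, hy, hcudef]
      have e1 : (inner ℝ p (cw - cu) : ℝ) = (inner ℝ (S cu - yd) (S (cw - cu)) : ℝ) := by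
        rw [e0]
        exact ContinuousLinearMap.adjoint_inner_left S (cw - cu) (S cu - yd)
      rw [hδdef, ← map_sub, ← e1, L2.inner_def]
      refine integral_congr_ae ?_
      filter_upwards [Lp.coeFn_sub cw cu] with x hx
      rw [hx, Pi.sub_apply]
      simp [RCLike.inner_apply, conj_trivial]
      ring
    rw [hinner] at hVI
    -- integrability facts
    have haeu : ∀ᵐ x ∂(volume.restrict Ω), g (u x) < ⊤ :=
      ae_lt_top' (hgm.comp_aemeasurable hu) hGne
    have haew : ∀ᵐ x ∂(volume.restrict Ω), g (w x) < ⊤ :=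
      ae_lt_top' (hgm.comp_aemeasurable hwm) hGwne
    have hgu_int : Integrable (fun x => (g (u x)).toReal) (volume.restrict Ω) :=
      integrable_toReal_of_lintegral_ne_top (hgm.comp_aemeasurable hu) hGne
    have hgw_int : Integrable (fun x => (g (w x)).toReal) (volume.restrict Ω) :=
      integrable_toReal_of_lintegral_ne_top (hgm.comp_aemeasurable hwm) hGwne
    have hgu_eq : ∫ x, (g (u x)).toReal ∂(volume.restrict Ω) = gu := by
      rw [hgu]; exact integral_toReal (hgm.comp_aemeasurable hu) haeu
    have hgw_eq : ∫ x, (g (w x)).toReal ∂(volume.restrict Ω) = gw := by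
      rw [hgwdef]; exact integral_toReal (hgm.comp_aemeasurable hwm) haew
    have hpu_int : Integrable (fun x => p x * (cw x - cu x)) (volume.restrict Ω) := by
      refine (L2.integrable_inner (𝕜 := ℝ) p (cw - cu)).congr ?_
      filter_upwards [Lp.coeFn_sub cw cu] with x hx
      rw [hx, Pi.sub_apply]
      simp [RCLike.inner_apply, conj_trivial]
      ring
    -- the set integral over E is ≤ 0
    have heq : (fun x => (((g (u x)).toReal - (g (w x)).toReal) - p x * (cw x - cu x)))
        =ᵐ[volume.restrict Ω] E.indicator h := by
      filter_upwards [huu', hpp', hw, hcu_coe, hcw_coe] with x e1 e2 e3 e4 e5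
      rw [hhdef, e4, e5]
      simp only [Set.indicator_apply, Set.mem_compl_iff]
      by_cases hxE : x ∈ E <;> by_cases hxA : x ∈ A <;>
        simp [hxE, hxA, e1, e2, e3, hg0] <;> ring
    have hsub : Integrable (fun x => (g (u x)).toReal - (g (w x)).toReal) (volume.restrict Ω) :=
      hgu_int.sub hgw_int
    have hset : ∫ x in E, h x ∂(volume.restrict Ω) ≤ 0 := by
      rw [← integral_indicator hE, ← integral_congr_ae heq,
        integral_sub hsub hpu_int, integral_sub hgu_int hgw_int,
        hgu_eq, hgw_eq]
      linarith
    -- integrability of h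
    have hint : Integrable h (volume.restrict Ω) := by
      rw [hhdef]
      refine Integrable.add ?_ ?_
      · exact hgu_int.congr (by filter_upwards [huu'] with x e1; rw [e1])
      · have h9 : Integrable (fun x => p' x * u' x) (volume.restrict Ω) := by
          refine (L2.integrable_inner (𝕜 := ℝ) p u).congr ?_
          filter_upwards [huu', hpp'] with x e1 e2
          simp [RCLike.inner_apply, conj_trivial, e1, e2]
          ring
        have h10 := h9.indicator hA
        have h11 : (A.indicator fun x => p' x * u' x)
            = fun x => A.indicator (fun _ => (1:ℝ)) x * (p' x * u' x) := by
          funext x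
          rw [Set.indicator_apply, Set.indicator_apply]
          split_ifs <;> simp
        exact h11 ▸ h10
    -- E is null
    have hE0 : (volume.restrict Ω) E = 0 := by
      by_contra hne0
      have hpos : 0 < (volume.restrict Ω) (Function.support h ∩ E) := by
        refine lt_of_lt_of_le (pos_iff_ne_zero.mpr hne0) (measure_mono fun x hx => ?_)
        have hx' : 0 < h x := by rw [hEdef] at hx; exact hx
        exact ⟨fun hc => absurd hc (ne_of_gt hx'), hx⟩
      have hgt := (setIntegral_pos_iff_support_of_nonneg_ae
        ((ae_restrict_iff' hE).mpr (ae_of_all _ fun x hx =>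
          le_of_lt (by rw [hEdef] at hx; exact hx)))
        hint.integrableOn).mpr hpos
      linarith
    have hae : ∀ᵐ x ∂(volume.restrict Ω), h x ≤ 0 := by
      rw [ae_iff]
      refine measure_mono_null (fun a ha => ?_) hE0
      rw [hEdef]
      exact not_le.mp ha
    -- conclude pointwise
    filter_upwards [huu', hpp', hae, haeu] with x e1 e2 e3 e4
    have hne : g (u' x) ≠ ⊤ := by rw [← e1]; exact e4.ne
    have hg2 : μ₀/2 * (u' x)^2 ≤ (g (u' x)).toReal := by
      have h11 := hglb (u' x)
      rw [← ENNReal.ofReal_toReal hne] at h11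
      exact (ENNReal.ofReal_le_ofReal_iff ENNReal.toReal_nonneg).mp h11
    simp only [hhdef] at e3
    have h7 : -(A.indicator (fun _ => (1:ℝ)) x * (p' x * u' x)) ≤ |p' x| * |u' x| := by
      rw [← abs_mul, Set.indicator_apply]
      split_ifs
      · rw [one_mul]; exact neg_le_abs _
      · simp [abs_nonneg]
        positivity
    have habs : |u' x| ≤ 2/μ₀ * |p' x| := by
      rcases eq_or_ne (u' x) 0 with h8 | h8
      · rw [h8, abs_zero]; positivity
      · have h9 : 0 < |u' x| := abs_pos.mpr h8
        rw [← sq_abs] at hg2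
        have h11 : μ₀ * |u' x| ≤ 2 * |p' x| := by nlinarith [h9, hg2, e3, h7]
        have h12 : |u' x| ≤ 2 * |p' x| / μ₀ := by rw [le_div_iff₀ hμ₀]; linarith
        have h13 : 2 / μ₀ * |p' x| = 2 * |p' x| / μ₀ := by ring
        linarith
    calc ‖u x‖ = |u' x| := by rw [Real.norm_eq_abs, e1]
      _ ≤ 2/μ₀ * |p' x| := habs
      _ = ‖((2 / μ₀) • (⇑p : EuclideanSpace ℝ (Fin d) → ℝ)) x‖ := by
          rw [Pi.smul_apply, smul_eq_mul, Real.norm_eq_abs, abs_mul, abs_of_pos hμ₀', e2]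
  -- conclusion
  constructor
  · calc eLpNorm (⇑u) q (volume.restrict Ω)
        ≤ eLpNorm ((2 / μ₀) • (⇑p : EuclideanSpace ℝ (Fin d) → ℝ)) q (volume.restrict Ω) :=
          eLpNorm_mono_ae hptw
      _ = ‖(2 / μ₀ : ℝ)‖₊ * eLpNorm (⇑p) q (volume.restrict Ω) := eLpNorm_const_smul _ _ _ _
      _ ≤ ENNReal.ofReal (2 / μ₀) * ENNReal.ofReal C0 :=
          mul_le_mul' (le_of_eq (Real.enorm_eq_ofReal hμ₀'.le)) hpq
      _ = ENNReal.ofReal ((2 / μ₀) * C0) := (ENNReal.ofReal_mul hμ₀'.le).symm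
      _ ≤ ENNReal.ofReal ((1 + 2 / μ₀) * C0 + 1) := by
          refine ENNReal.ofReal_le_ofReal ?_
          nlinarith
  · refine le_trans hpq (ENNReal.ofReal_le_ofReal ?_)
    nlinarith
end
end

section
/- There is a uniform bound: there exist M > 0 and P' > 0 such that ‖y_A − y_d‖_Y ≤ M, ‖u_A‖_{L^∞(Ω)} ≤ P' and ‖p_A‖_{L^q(Ω)} ≤ P' for all measurable sets A ⊆ Ω and all solutions (u_A, y_A, p_A) of (P_A) with χ_A·u_A = u_A, where q > 3 is the exponent for which S* maps Y boundedly into L^q(Ω). -/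
open MeasureTheory ENNReal Set Filter Metric Topology
open scoped Classical symmDiff NNReal

noncomputable section

namespace L0Control

variable {α : Type*} [MeasurableSpace α]

variable {Y : Type*} [NormedAddCommGroup Y] [InnerProductSpace ℝ Y]

/-- `chiMul` of the zero function is zero. -/
theorem chiMul_zero' {μ : Measure α} (A : Set α) :
    chiMul (μ := μ) A (0 : Lp ℝ 2 μ) = 0 := by
  unfold chiMul
  split_ifs with hA
  · have hae : A.indicator ((0 : Lp ℝ 2 μ) : α → ℝ) =ᵐ[μ] (0 : α → ℝ) := by
      filter_upwards [Lp.coeFn_zero ℝ 2 μ] with x hx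
      simp only [Set.indicator_apply]
      split_ifs
      · simpa using hx
      · rfl
    rw [(MemLp.toLp_eq_toLp_iff _ (MemLp.zero : MemLp (0 : α → ℝ) 2 μ)).mpr hae, MemLp.toLp_zero]
  · rfl

end L0Control

open L0Control

set_option maxHeartbeats 1000000 in
/-- Non-strongly-convex case: uniform bounds `‖y_A − y_d‖_Y ≤ M`,
`‖u_A‖_{L^∞} ≤ P'` and `‖p_A‖_{L^q} ≤ P'` for all measurable `A ⊆ Ω` and all
solutions of `(P_A)` with `χ_A u_A = u_A`, where `q > 3` and `S* ∈ L(Y, L^q(Ω))`. -/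
theorem uniform_bounds_nonstrongly_convex
    {d : ℕ} {Ω : Set (EuclideanSpace ℝ (Fin d))}
    (hΩm : MeasurableSet Ω) (hΩfin : volume Ω < ⊤)
    {Y : Type*} [NormedAddCommGroup Y] [InnerProductSpace ℝ Y] [CompleteSpace Y]
    (S : Lp ℝ 2 (volume.restrict Ω) →L[ℝ] Y) (yd : Y)
    (g : ℝ → ℝ≥0∞)
    (hg_proper : ∃ u : ℝ, g u ≠ ⊤)
    (hg_lsc : LowerSemicontinuous g)
    (hg_zero : ∀ u : ℝ, g u = 0 ↔ u = 0)
    (β : EuclideanSpace ℝ (Fin d) → ℝ)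
    (hβ : Integrable β (volume.restrict Ω))
    (hg_conv : ∀ u v l : ℝ, l ∈ Set.Ioo (0 : ℝ) 1 →
      g (l * u + (1 - l) * v) ≤ ENNReal.ofReal l * g u + ENNReal.ofReal (1 - l) * g v)
    (hgdom : ∃ Rg : ℝ, ∀ u : ℝ, g u ≠ ⊤ → |u| ≤ Rg)
    (q : ℝ≥0∞) (hq : 3 < q) (CS : ℝ)
    (hSstar : ∀ z : Y,
      eLpNorm (⇑(ContinuousLinearMap.adjoint S z)) q (volume.restrict Ω) ≤ ENNReal.ofReal (CS * ‖z‖))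
    :
    ∃ M P' : ℝ, 0 < M ∧ 0 < P' ∧
      ∀ A : Set (EuclideanSpace ℝ (Fin d)), MeasurableSet A → A ⊆ Ω →
        ∀ (uA : Lp ℝ 2 (volume.restrict Ω)) (yA : Y) (pA : Lp ℝ 2 (volume.restrict Ω)),
          IsSolution S yd g β A uA yA pA → chiMul A uA = uA →
            ‖yA - yd‖ ≤ M ∧ eLpNorm (⇑uA) ⊤ (volume.restrict Ω) ≤ ENNReal.ofReal P' ∧
              eLpNorm (⇑pA) q (volume.restrict Ω) ≤ ENNReal.ofReal P' := by
  classical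
  obtain ⟨Rg, hRg⟩ := hgdom
  obtain ⟨u0, hu0⟩ := hg_proper
  have hRg0 : 0 ≤ Rg := le_trans (abs_nonneg u0) (hRg u0 hu0)
  set M : ℝ := ‖yd‖ + 1 with hMdef
  have hM0 : 0 < M := by positivity
  set P' : ℝ := max Rg (|CS| * M) + 1 with hP'def
  have hRgP' : Rg ≤ P' := by
    have := le_max_left Rg (|CS| * M); linarith
  have hCSP' : |CS| * M ≤ P' := by
    have := le_max_right Rg (|CS| * M); linarith
  have hP'0 : 0 < P' := lt_of_le_of_lt hRg0 (lt_of_le_of_lt (le_max_left _ _) (by linarith))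
  refine ⟨M, P', hM0, hP'0, ?_⟩
  intro A hAm hAΩ uA yA pA hsol hchi
  obtain ⟨hmin, hy, hp⟩ := hsol
  -- value of J at 0
  have hJ0 : Jfun S yd g β (0 : Lp ℝ 2 (volume.restrict Ω)) A
      = ((2⁻¹ * ‖yd‖ ^ 2 + ∫ x in A, β x ∂(volume.restrict Ω) : ℝ) : EReal) := by
    unfold Jfun
    have h1 : (∫⁻ x, g ((0 : Lp ℝ 2 (volume.restrict Ω)) x) ∂(volume.restrict Ω)) = 0 := by
      have : (fun x => g ((0 : Lp ℝ 2 (volume.restrict Ω)) x)) =ᵐ[volume.restrict Ω] (fun _ => (0 : ℝ≥0∞)) := by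
        filter_upwards [Lp.coeFn_zero ℝ 2 (volume.restrict Ω)] with x hx
        rw [hx]; exact (hg_zero 0).mpr rfl
      rw [lintegral_congr_ae this, lintegral_zero]
    rw [h1, chiMul_zero', map_zero, zero_sub, norm_neg]
    simp
  have hle := hmin 0
  rw [hJ0] at hle
  unfold Jfun at hle
  set a : ℝ := 2⁻¹ * ‖S (chiMul A uA) - yd‖ ^ 2 + ∫ x in A, β x ∂(volume.restrict Ω) with hadef
  set b : ℝ := 2⁻¹ * ‖yd‖ ^ 2 + ∫ x in A, β x ∂(volume.restrict Ω) with hbdef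
  set G : ℝ≥0∞ := ∫⁻ x, g (uA x) ∂(volume.restrict Ω) with hGdef
  -- G is finite
  have hGtop : G ≠ ⊤ := by
    intro htop
    rw [htop] at hle
    simp only [EReal.coe_ennreal_top] at hle
    rw [EReal.add_top_of_ne_bot (EReal.coe_ne_bot a)] at hle
    exact not_le.mpr (EReal.coe_lt_top b) hle
  -- real inequality a ≤ b
  have hab : a ≤ b := by
    have hG : ((G : EReal)) = ((G.toReal : ℝ) : EReal) := by
      rw [← EReal.toReal_coe_ennreal (x := G), EReal.coe_toReal]
      · simp [hGtop]
      · simp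
    rw [hG, ← EReal.coe_add, EReal.coe_le_coe_iff] at hle
    have := ENNReal.toReal_nonneg (a := G)
    linarith
  -- norm bound on yA - yd
  have hyM : ‖yA - yd‖ ≤ M := by
    have hsq : ‖S (chiMul A uA) - yd‖ ^ 2 ≤ ‖yd‖ ^ 2 := by
      have : (2⁻¹ : ℝ) * ‖S (chiMul A uA) - yd‖ ^ 2 ≤ 2⁻¹ * ‖yd‖ ^ 2 := by
        simp only [hadef, hbdef] at hab; linarith
      linarith
    have h1 : ‖S (chiMul A uA) - yd‖ ≤ ‖yd‖ :=
      le_of_pow_le_pow_left₀ two_ne_zero (norm_nonneg _) hsq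
    rw [hy]
    calc ‖S (chiMul A uA) - yd‖ ≤ ‖yd‖ := h1
      _ ≤ M := by rw [hMdef]; linarith
  refine ⟨hyM, ?_, ?_⟩
  · -- L∞ bound on uA
    have hGlt : G < ⊤ := lt_top_iff_ne_top.mpr hGtop
    have hmeas : AEMeasurable (fun x => g (uA x)) (volume.restrict Ω) :=
      hg_lsc.measurable.comp_aemeasurable (Lp.aestronglyMeasurable uA).aemeasurable
    have hae : ∀ᵐ x ∂(volume.restrict Ω), g (uA x) < ⊤ := ae_lt_top' hmeas hGtop
    have hbd : ∀ᵐ x ∂(volume.restrict Ω), ‖uA x‖ ≤ Rg := by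
      filter_upwards [hae] with x hx
      rw [Real.norm_eq_abs]
      exact hRg _ hx.ne
    calc eLpNorm (⇑uA) ⊤ (volume.restrict Ω) = eLpNormEssSup (⇑uA) (volume.restrict Ω) := eLpNorm_exponent_top
      _ ≤ ENNReal.ofReal Rg := eLpNormEssSup_le_of_ae_bound hbd
      _ ≤ ENNReal.ofReal P' := ENNReal.ofReal_le_ofReal hRgP'
  · -- Lq bound on pA
    rw [hp]
    refine le_trans (hSstar (yA - yd)) (ENNReal.ofReal_le_ofReal ?_)
    calc CS * ‖yA - yd‖ ≤ |CS| * ‖yA - yd‖ :=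
          mul_le_mul_of_nonneg_right (le_abs_self CS) (norm_nonneg _)
      _ ≤ |CS| * M := mul_le_mul_of_nonneg_left hyM (abs_nonneg CS)
      _ ≤ P' := hCSP'
end
end
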